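/- arXiv:1002.4883 — 3 statements merged into one kernel-verified Lean document; each statement's English description precedes it below -/
import Mathlib

section
/- Let g be a holomorphic function on the open unit disk 𝔻 with Re g(z) ≥ 0 for all z ∈ 𝔻, and let ζ be a point of the unit circle ∂𝔻. Then the angular limit ℓ := ∠lim_{z→ζ} (1/2)·(1 − conj(ζ)·z)·g(z) exists and is a nonnegative real number, and moreover Re g(z) ≥ ℓ·(1 − |z|²)/|z − ζ|² for every z ∈ 𝔻. -/
open Complex Filter Metric Finset

noncomputable section

/-- The Stolz angle at a boundary point `ζ` with opening parameter `M`. -/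
def StolzAngle (ζ : ℂ) (M : ℝ) : Set ℂ :=
  {z : ℂ | ‖z‖ < 1 ∧ ‖ζ - z‖ < M * (1 - ‖z‖)}

/-- Angular (nontangential) limit of `h` at `ζ` equals `L`: within every Stolz
angle `S(ζ, M)`, `M > 1`, the function tends to `L`. -/
def AngularLimit (h : ℂ → ℂ) (ζ : ℂ) (L : ℂ) : Prop :=
  ∀ M : ℝ, 1 < M → Tendsto h (nhdsWithin ζ (StolzAngle ζ M)) (nhds L)

/-- Angular limit of `h` at `ζ` is `∞`: `|h|` tends to `+∞` within every Stolz angle. -/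
def AngularLimitInfty (h : ℂ → ℂ) (ζ : ℂ) : Prop :=
  ∀ M : ℝ, 1 < M → Tendsto (fun z => ‖h z‖) (nhdsWithin ζ (StolzAngle ζ M)) atTop

namespace JWCaux

/-- key algebraic identity -/
lemma normSq_key (a z : ℂ) :
    normSq (1 - (starRingEnd ℂ) a * z) - normSq (a - z) = (1 - normSq a) * (1 - normSq z) := by
  simp only [normSq_apply, Complex.sub_re, Complex.sub_im, Complex.mul_re, Complex.mul_im,
    Complex.one_re, Complex.one_im, Complex.conj_re, Complex.conj_im]
  ring

lemma mem_ball_iff_abs {z : ℂ} : z ∈ ball (0:ℂ) 1 ↔ norm z < 1 := by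
  simp [mem_ball, dist_eq]

lemma den_ne {a z : ℂ} (ha : norm a < 1) (hz : norm z ≤ 1) :
    (1 : ℂ) - (starRingEnd ℂ) a * z ≠ 0 := by
  intro h
  have h1 : (1 : ℂ) = (starRingEnd ℂ) a * z := by linear_combination h
  have : norm ((starRingEnd ℂ) a * z) < 1 := by
    rw [norm_mul, Complex.norm_conj]
    calc norm a * norm z ≤ norm a * 1 :=
      mul_le_mul_of_nonneg_left hz (norm_nonneg a)
    _ < 1 := by simpa using ha
  rw [← h1] at this; simp at this

/-- The Möbius involution of the disk. -/
def mob (a z : ℂ) : ℂ := (a - z) / (1 - (starRingEnd ℂ) a * z)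

lemma normSq_lt_one {z : ℂ} (h : norm z < 1) : normSq z < 1 := by
  have h1 := Complex.sq_norm z
  nlinarith [norm_nonneg z]

lemma one_sub_normSq_mob (a z : ℂ) (ha : norm a < 1) (hz : norm z ≤ 1) :
    1 - normSq (mob a z)
      = (1 - normSq a) * (1 - normSq z) / normSq (1 - (starRingEnd ℂ) a * z) := by
  have hd := den_ne ha hz
  have hpos : 0 < normSq (1 - (starRingEnd ℂ) a * z) := normSq_pos.2 hd
  rw [mob, normSq_div, ← normSq_key a z]
  rw [one_sub_div hpos.ne']

lemma mob_mem (a z : ℂ) (ha : norm a < 1) (hz : norm z < 1) :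
    norm (mob a z) < 1 := by
  have h := one_sub_normSq_mob a z ha hz.le
  have hpos : 0 < normSq (1 - (starRingEnd ℂ) a * z) := normSq_pos.2 (den_ne ha hz.le)
  have ha' : normSq a < 1 := normSq_lt_one ha
  have hz' : normSq z < 1 := normSq_lt_one hz
  have h1 : 0 < (1 - normSq a) * (1 - normSq z) := by nlinarith
  have h2 : normSq (mob a z) < 1 := by nlinarith [div_pos h1 hpos]
  have := Real.sqrt_lt_sqrt (normSq_nonneg _) h2
  simpa [Complex.norm_def] using this

lemma mob_diffOn (a : ℂ) (ha : norm a < 1) :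
    DifferentiableOn ℂ (mob a) (ball (0:ℂ) 1) := by
  apply DifferentiableOn.div
  · exact ((differentiable_const a).sub differentiable_id).differentiableOn
  · exact ((differentiable_const _).sub
      ((differentiable_const _).mul differentiable_id)).differentiableOn
  · intro z hz
    exact den_ne ha (mem_ball_iff_abs.1 hz).le

lemma mob_invol (a z : ℂ) (ha : norm a < 1) (hz : norm z < 1) :
    mob a (mob a z) = z := by
  have hd1 : (1 : ℂ) - (starRingEnd ℂ) a * z ≠ 0 := den_ne ha hz.le
  have hna : (1 : ℂ) - (starRingEnd ℂ) a * a ≠ 0 := den_ne ha ha.le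
  have h2 : (1 : ℂ) - (starRingEnd ℂ) a * mob a z
      = (1 - (starRingEnd ℂ) a * a)/(1 - (starRingEnd ℂ) a * z) := by
    rw [mob]; field_simp; ring
  have h3 : a - mob a z = z * (1 - (starRingEnd ℂ) a * a)/(1 - (starRingEnd ℂ) a * z) := by
    rw [mob, eq_div_iff hd1, sub_mul, div_mul_cancel₀ _ hd1]; ring
  rw [mob, h2, h3]
  rw [div_div_div_cancel_right₀ hd1]; exact mul_div_cancel_right₀ z hna

set_option maxHeartbeats 1000000 in
/-- Schwarz–Pick inequality, product form. -/
lemma schwarzPick {f : ℂ → ℂ} (hd : DifferentiableOn ℂ f (ball 0 1))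
    (hm : ∀ z ∈ ball (0:ℂ) 1, norm (f z) < 1)
    {z w : ℂ} (hz : norm z < 1) (hw : norm w < 1) :
    (1 - normSq z) * (1 - normSq w) * normSq (1 - (starRingEnd ℂ) (f w) * f z)
      ≤ (1 - normSq (f z)) * (1 - normSq (f w)) * normSq (1 - (starRingEnd ℂ) w * z) := by
  have hzb : z ∈ ball (0:ℂ) 1 := mem_ball_iff_abs.2 hz
  have hwb : w ∈ ball (0:ℂ) 1 := mem_ball_iff_abs.2 hw
  have hfw : norm (f w) < 1 := hm w hwb
  have hfz : norm (f z) < 1 := hm z hzb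
  have hmapsmob : Set.MapsTo (mob w) (ball (0:ℂ) 1) (ball (0:ℂ) 1) := fun u hu =>
    mem_ball_iff_abs.2 (mob_mem w u hw (mem_ball_iff_abs.1 hu))
  have hmapsf : Set.MapsTo f (ball (0:ℂ) 1) (ball (0:ℂ) 1) := fun u hu =>
    mem_ball_iff_abs.2 (hm u hu)
  have hdh : DifferentiableOn ℂ (fun u => mob (f w) (f (mob w u))) (ball (0:ℂ) 1) :=
    DifferentiableOn.comp (mob_diffOn (f w) hfw)
      (DifferentiableOn.comp hd (mob_diffOn w hw) hmapsmob)
      (hmapsf.comp hmapsmob)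
  have hh0 : mob (f w) (f (mob w (0:ℂ))) = 0 := by
    have h1 : mob w 0 = w := by simp [mob]
    rw [h1, mob, sub_self, zero_div]
  have hmapsh : Set.MapsTo (fun u => mob (f w) (f (mob w u))) (ball (0:ℂ) 1)
      (ball (mob (f w) (f (mob w (0:ℂ)))) 1) := by
    rw [hh0]
    intro u hu
    exact mem_ball_iff_abs.2
      (mob_mem (f w) (f (mob w u)) hfw (mem_ball_iff_abs.1 (hmapsf (hmapsmob hu))))
  have hkey : norm (mob (f w) (f z)) ≤ norm (mob w z) := by
    have hu : mob w z ∈ ball (0:ℂ) 1 := hmapsmob hzb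
    have hS := Complex.dist_le_div_mul_dist_of_mapsTo_ball hdh (hmapsh.mono_right ball_subset_closedBall) hu
    simp only [mob_invol w z hw hz, hh0] at hS
    simpa [dist_eq, dist_zero_right] using hS
  have h2 : normSq (mob (f w) (f z)) ≤ normSq (mob w z) := by
    rw [Complex.normSq_eq_norm_sq, Complex.normSq_eq_norm_sq]
    exact pow_le_pow_left₀ (norm_nonneg _) hkey 2
  have h3 : 1 - normSq (mob w z) ≤ 1 - normSq (mob (f w) (f z)) := by linarith
  rw [one_sub_normSq_mob w z hw hz.le, one_sub_normSq_mob (f w) (f z) hfw hfz.le] at h3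
  have hpw : 0 < normSq (1 - (starRingEnd ℂ) w * z) := normSq_pos.2 (den_ne hw hz.le)
  have hpf : 0 < normSq (1 - (starRingEnd ℂ) (f w) * f z) := normSq_pos.2 (den_ne hfw hfz.le)
  rw [div_le_div_iff₀ hpw hpf] at h3
  nlinarith [h3]

lemma re_one_add_div_one_sub (a : ℂ) :
    ((1 + a)/(1 - a)).re = (1 - normSq a) / normSq (1 - a) := by
  rw [Complex.div_re, ← add_div]
  congr 1
  simp only [Complex.add_re, Complex.add_im, Complex.sub_re, Complex.sub_im,
    Complex.one_re, Complex.one_im, normSq_apply]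
  ring

lemma re_zeta_div (ζ z : ℂ) (hζ : normSq ζ = 1) :
    ((ζ + z)/(ζ - z)).re = (1 - normSq z) / normSq (ζ - z) := by
  rw [Complex.div_re, ← add_div]
  congr 1
  simp only [Complex.add_re, Complex.add_im, Complex.sub_re, Complex.sub_im]
  simp only [normSq_apply] at hζ ⊢
  linear_combination hζ

lemma abs_sub_one_le {w : ℂ} (h : 0 ≤ w.re) : norm (w - 1) ≤ norm (w + 1) := by
  rw [Complex.norm_def, Complex.norm_def]
  apply Real.sqrt_le_sqrt
  simp only [normSq_apply, Complex.sub_re, Complex.sub_im, Complex.add_re, Complex.add_im,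
    Complex.one_re, Complex.one_im]
  nlinarith

end JWCaux

set_option maxHeartbeats 2000000 in
/-- Lemma `l.JWC`: for a holomorphic `g` on the unit disk with
`Re g ≥ 0`, and `ζ` on the unit circle, the angular limit
`ℓ = ∠lim (1/2)(1 - conj ζ · z) g(z)` exists, is a nonnegative real, and
`Re g(z) ≥ ℓ (1 - |z|²)/|z - ζ|²` on the disk. -/
theorem stmt0 (g : ℂ → ℂ)
    (hg : DifferentiableOn ℂ g (ball (0:ℂ) 1))
    (hre : ∀ z ∈ ball (0:ℂ) 1, 0 ≤ (g z).re)
    (ζ : ℂ) (hζ : ‖ζ‖ = 1) :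
    ∃ ℓ : ℝ, 0 ≤ ℓ ∧
      AngularLimit (fun z => (1/2 : ℂ) * (1 - (starRingEnd ℂ) ζ * z) * g z) ζ (ℓ : ℂ) ∧
      ∀ z ∈ ball (0:ℂ) 1,
        ℓ * ((1 - ‖z‖ ^ 2) / ‖z - ζ‖ ^ 2) ≤ (g z).re := by
  have hnsζ : normSq ζ = 1 := by rw [Complex.normSq_eq_norm_sq, hζ]; norm_num
  have hconjζ : (starRingEnd ℂ) ζ * ζ = 1 := by
    rw [mul_comm, Complex.mul_conj, hnsζ]; simp
  have hb : ∀ z ∈ ball (0:ℂ) 1, norm z < 1 := fun z hz => JWCaux.mem_ball_iff_abs.1 hz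
  have hzn : ∀ z ∈ ball (0:ℂ) 1, normSq z < 1 := fun z hz => JWCaux.normSq_lt_one (hb z hz)
  have hζz : ∀ z ∈ ball (0:ℂ) 1, ζ - z ≠ 0 := by
    intro z hz h
    have h2 : z = ζ := by linear_combination -h
    have h3 := hb z hz
    rw [h2, hζ] at h3
    exact lt_irrefl 1 h3
  have hNpos : ∀ z ∈ ball (0:ℂ) 1, 0 < normSq (ζ - z) := fun z hz => normSq_pos.2 (hζz z hz)
  -- the infimum
  set u : ℂ → ℝ := fun z => (g z).re * normSq (ζ - z) / (1 - normSq z) with hu_def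
  set S : Set ℝ := u '' (ball (0:ℂ) 1) with hS_def
  have h0ball : (0:ℂ) ∈ ball (0:ℂ) 1 := mem_ball_self one_pos
  have hSne : S.Nonempty := ⟨u 0, Set.mem_image_of_mem u h0ball⟩
  have hSnon : ∀ s ∈ S, (0:ℝ) ≤ s := by
    rintro s ⟨z, hz, rfl⟩
    have h1 := hre z hz
    have h2 := hzn z hz
    have h3 := (hNpos z hz).le
    have h4 : (0:ℝ) < 1 - normSq z := by linarith
    simp only [hu_def]
    positivity
  set ℓ : ℝ := sInf S with hl_def
  have hl0 : 0 ≤ ℓ := le_csInf hSne hSnon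
  have hbdd : BddBelow S := ⟨0, fun s hs => hSnon s hs⟩
  have hkey_le : ∀ z ∈ ball (0:ℂ) 1, ℓ * (1 - normSq z) ≤ (g z).re * normSq (ζ - z) := by
    intro z hz
    have h1 : ℓ ≤ u z := csInf_le hbdd (Set.mem_image_of_mem u hz)
    have h2 : (0:ℝ) < 1 - normSq z := by linarith [hzn z hz]
    simp only [hu_def] at h1
    exact (le_div_iff₀ h2).1 h1
  have hineq : ∀ z ∈ ball (0:ℂ) 1,
      ℓ * ((1 - norm z ^ 2) / norm (z - ζ) ^ 2) ≤ (g z).re := by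
    intro z hz
    have habs1 : norm (z - ζ) ^ 2 = normSq (ζ - z) := by
      rw [Complex.sq_norm, ← neg_sub ζ z, normSq_neg]
    rw [habs1, Complex.sq_norm, mul_div_assoc', div_le_iff₀ (hNpos z hz)]
    exact hkey_le z hz
  refine ⟨ℓ, hl0, ?_, hineq⟩
  -- the angular limit
  intro M hM
  have hM0 : (0:ℝ) < M := by linarith
  -- the subtracted function
  set Gf : ℂ → ℂ := fun z => g z - (ℓ:ℂ) * ((ζ + z)/(ζ - z)) with hGf_def
  have hGd : DifferentiableOn ℂ Gf (ball (0:ℂ) 1) := by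
    apply hg.sub
    apply DifferentiableOn.mul (differentiableOn_const _)
    exact DifferentiableOn.div
      (((differentiable_const _).add differentiable_id).differentiableOn)
      (((differentiable_const _).sub differentiable_id).differentiableOn)
      (fun z hz => hζz z hz)
  have hGre : ∀ z ∈ ball (0:ℂ) 1,
      (Gf z).re = (g z).re - ℓ * ((1 - normSq z) / normSq (ζ - z)) := by
    intro z hz
    simp only [hGf_def, Complex.sub_re]
    rw [Complex.re_ofReal_mul, JWCaux.re_zeta_div ζ z hnsζ]
  have hGre0 : ∀ z ∈ ball (0:ℂ) 1, 0 ≤ (Gf z).re := by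
    intro z hz
    rw [hGre z hz, sub_nonneg, mul_div_assoc', div_le_iff₀ (hNpos z hz)]
    exact hkey_le z hz
  -- the Cayley transform of Gf
  set fD : ℂ → ℂ := fun z => (Gf z - 1)/(Gf z + 1) with hfD_def
  have hden : ∀ z ∈ ball (0:ℂ) 1, Gf z + 1 ≠ 0 := by
    intro z hz h
    have h1 : (Gf z + 1).re = 0 := by rw [h]; simp
    rw [Complex.add_re, Complex.one_re] at h1
    linarith [hGre0 z hz]
  have habsden : ∀ z ∈ ball (0:ℂ) 1, 0 < norm (Gf z + 1) :=
    fun z hz => norm_pos_iff.2 (hden z hz)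
  have hfle : ∀ z ∈ ball (0:ℂ) 1, norm (fD z) ≤ 1 := by
    intro z hz
    simp only [hfD_def]
    rw [norm_div, div_le_one (habsden z hz)]
    exact JWCaux.abs_sub_one_le (hGre0 z hz)
  have hone_sub_fD : ∀ z ∈ ball (0:ℂ) 1, (1:ℂ) - fD z = 2/(Gf z + 1) := by
    intro z hz
    have hGz := hden z hz
    show (1:ℂ) - (Gf z - 1)/(Gf z + 1) = 2/(Gf z + 1)
    field_simp
    ring
  have hfne1 : ∀ z ∈ ball (0:ℂ) 1, (1:ℂ) - fD z ≠ 0 := by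
    intro z hz
    rw [hone_sub_fD z hz]
    exact div_ne_zero two_ne_zero (hden z hz)
  have hGf_eq : ∀ z ∈ ball (0:ℂ) 1, Gf z = (1 + fD z)/(1 - fD z) := by
    intro z hz
    rw [eq_div_iff (hfne1 z hz)]
    have hGz := hden z hz
    show Gf z * ((1:ℂ) - (Gf z - 1)/(Gf z + 1)) = 1 + (Gf z - 1)/(Gf z + 1)
    field_simp
    ring
  have hfdiff : DifferentiableOn ℂ fD (ball (0:ℂ) 1) :=
    DifferentiableOn.div (hGd.sub (differentiableOn_const _))
      (hGd.add (differentiableOn_const _)) hden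
  have hstolz_ball : ∀ w ∈ StolzAngle ζ M, w ∈ ball (0:ℂ) 1 :=
    fun w hw => JWCaux.mem_ball_iff_abs.2 hw.1
  -- KEY limit
  have hKEY : Tendsto (fun z => (ζ - z) * Gf z) (nhdsWithin ζ (StolzAngle ζ M)) (nhds 0) := by
    by_cases hcase : ∀ z ∈ ball (0:ℂ) 1, norm (fD z) < 1
    case neg =>
      -- constant case
      push_neg at hcase
      obtain ⟨w₀, hw₀, h1le⟩ := hcase
      have hmax : IsMaxOn (norm ∘ fD) (ball (0:ℂ) 1) w₀ := by
        intro z hz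
        simp only [Function.comp_apply]
        exact le_trans (hfle z hz) h1le
      have hconst := Complex.eqOn_of_isPreconnected_of_isMaxOn_norm
        (convex_ball (0:ℂ) 1).isPreconnected isOpen_ball hfdiff hw₀ hmax
      have hGconst : ∀ z ∈ ball (0:ℂ) 1, Gf z = Gf w₀ := by
        intro z hz
        rw [hGf_eq z hz, hGf_eq w₀ hw₀, hconst hz]
        rfl
      have hc : Tendsto (fun z : ℂ => (ζ - z) * Gf w₀) (nhdsWithin ζ (StolzAngle ζ M))
          (nhds 0) := by
        have h1 : Continuous fun z : ℂ => (ζ - z) * Gf w₀ :=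
          (continuous_const.sub continuous_id).mul continuous_const
        have h2 := (h1.tendsto ζ).mono_left (nhdsWithin_le_nhds (s := StolzAngle ζ M))
        simpa using h2
      apply hc.congr'
      filter_upwards [self_mem_nhdsWithin] with z hz
      rw [hGconst z (hstolz_ball z hz)]
    case pos =>
      rw [NormedAddCommGroup.tendsto_nhds_zero]
      intro ε hε
      set C : ℝ := 2/ε with hC_def
      have hC : 0 < C := by positivity
      set c : ℝ := 1/(33*C*M) with hc_def
      have hc : 0 < c := by positivity
      -- choose the near-infimum point
      obtain ⟨s, hsS, hslt⟩ := exists_lt_of_csInf_lt hSne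
        (show sInf S < ℓ + c by rw [← hl_def]; linarith)
      obtain ⟨z₀, hz₀b, rfl⟩ := hsS
      have hPpos : (0:ℝ) < 1 - normSq z₀ := by linarith [hzn z₀ hz₀b]
      have hNpos0 : (0:ℝ) < normSq (ζ - z₀) := hNpos z₀ hz₀b
      have hApos : (0:ℝ) < normSq (1 - fD z₀) := normSq_pos.2 (hfne1 z₀ hz₀b)
      have haz : norm (fD z₀) < 1 := hcase z₀ hz₀b
      have hRpos : (0:ℝ) < 1 - normSq (fD z₀) := by linarith [JWCaux.normSq_lt_one haz]
      -- Re Gf z₀ = R / A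
      have hRA : (Gf z₀).re * normSq (1 - fD z₀) = 1 - normSq (fD z₀) := by
        rw [hGf_eq z₀ hz₀b, JWCaux.re_one_add_div_one_sub]
        field_simp
      -- 33 C M R N < A P
      have hu3 : 33*C*M * ((1 - normSq (fD z₀)) * normSq (ζ - z₀))
          < normSq (1 - fD z₀) * (1 - normSq z₀) := by
        have h_ue : u z₀ * (1 - normSq z₀) = (g z₀).re * normSq (ζ - z₀) := by
          simp only [hu_def]
          field_simp
        have h_Gre : (Gf z₀).re * normSq (ζ - z₀)
            = (g z₀).re * normSq (ζ - z₀) - ℓ * (1 - normSq z₀) := by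
          rw [hGre z₀ hz₀b]
          field_simp
        have hc33 : c * (33*C*M) = 1 := by
          rw [hc_def]; field_simp
        have hEQ : (1 - normSq (fD z₀)) * normSq (ζ - z₀)
            = normSq (1 - fD z₀) * (1 - normSq z₀) * (u z₀ - ℓ) := by
          linear_combination (-(normSq (ζ - z₀))) * hRA
            + (normSq (1 - fD z₀)) * h_Gre - (normSq (1 - fD z₀)) * h_ue
        have hAPpos : 0 < normSq (1 - fD z₀) * (1 - normSq z₀) := mul_pos hApos hPpos
        have huℓ : u z₀ - ℓ < c := by linarith
        have hstep : 33*C*M * ((1 - normSq (fD z₀)) * normSq (ζ - z₀))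
            < 33*C*M * (normSq (1 - fD z₀) * (1 - normSq z₀) * c) := by
          rw [hEQ]
          apply mul_lt_mul_of_pos_left _ (by positivity)
          exact mul_lt_mul_of_pos_left huℓ hAPpos
        have heq2 : 33*C*M * (normSq (1 - fD z₀) * (1 - normSq z₀) * c)
            = normSq (1 - fD z₀) * (1 - normSq z₀) := by
          linear_combination (normSq (1 - fD z₀) * (1 - normSq z₀)) * hc33
        linarith
      -- the radius
      set r : ℝ := min (norm (1 - fD z₀) / (2*C)) (norm (ζ - z₀)) with hr_def
      have habs1a : 0 < norm (1 - fD z₀) := norm_pos_iff.2 (hfne1 z₀ hz₀b)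
      have habsz₀ : 0 < norm (ζ - z₀) := norm_pos_iff.2 (hζz z₀ hz₀b)
      have hr : 0 < r := lt_min (by positivity) habsz₀
      have hmem : {z : ℂ | ‖(ζ - z) * Gf z‖ < ε} ∈ nhdsWithin ζ (StolzAngle ζ M) := by
        rw [mem_nhdsWithin_iff]
        refine ⟨r, hr, ?_⟩
        rintro w ⟨hw1, hw2⟩
        have hwb : w ∈ ball (0:ℂ) 1 := hstolz_ball w hw2
        have habsw : norm w < 1 := hw2.1
        have hstw : norm (ζ - w) < M * (1 - norm w) := hw2.2
        have hdistw : norm (ζ - w) < r := by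
          have hds : norm (ζ - w) = dist w ζ := by
            rw [Complex.dist_eq, norm_sub_rev]
          rw [hds]
          exact mem_ball.1 hw1
        have hζw : ζ - w ≠ 0 := hζz w hwb
        have habsζw : 0 < norm (ζ - w) := norm_pos_iff.2 hζw
        -- key estimate via Schwarz–Pick
        have hkeyC : C * norm (ζ - w) < norm (1 - fD w) := by
          by_contra hcon
          push_neg at hcon
          have SP := JWCaux.schwarzPick hfdiff hcase (hb z₀ hz₀b) habsw
          have hQpos : (0:ℝ) < 1 - normSq w := by linarith [hzn w hwb]
          -- F1
          have habsfw1 : norm (1 - fD w) ≤ norm (1 - fD z₀) / 2 := by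
            have m1 : r ≤ norm (1 - fD z₀)/(2*C) := min_le_left _ _
            have h1 : C * norm (ζ - w) ≤ C * r :=
              mul_le_mul_of_nonneg_left hdistw.le hC.le
            have h2 : C * r ≤ C * (norm (1 - fD z₀)/(2*C)) :=
              mul_le_mul_of_nonneg_left m1 hC.le
            have h3 : C * (norm (1 - fD z₀)/(2*C)) = norm (1 - fD z₀)/2 := by
              field_simp
            linarith
          have hstep2 : norm (1 - fD z₀)/2
              ≤ norm (1 - (starRingEnd ℂ) (fD w) * fD z₀) := by
            have e2 : norm (fD z₀ * (1 - (starRingEnd ℂ) (fD w)))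
                ≤ norm (1 - fD w) := by
              rw [norm_mul]
              have e3 : norm (1 - (starRingEnd ℂ) (fD w)) = norm (1 - fD w) := by
                rw [show (1:ℂ) - (starRingEnd ℂ) (fD w) = (starRingEnd ℂ) (1 - fD w) by
                  rw [map_sub, map_one], Complex.norm_conj]
              rw [e3]
              nlinarith [haz.le, norm_nonneg (1 - fD w)]
            have e4 : norm (1 - fD z₀)
                ≤ norm (1 - (starRingEnd ℂ) (fD w) * fD z₀)
                  + norm (fD z₀ * (1 - (starRingEnd ℂ) (fD w))) := by
              have e : (1:ℂ) - fD z₀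
                  = (1 - (starRingEnd ℂ) (fD w) * fD z₀) - fD z₀ * (1 - (starRingEnd ℂ) (fD w)) := by
                ring
              rw [e, sub_eq_add_neg]
              refine le_trans (norm_add_le _ _) ?_
              rw [norm_neg]
            linarith
          have F1 : normSq (1 - fD z₀)
              ≤ 4 * normSq (1 - (starRingEnd ℂ) (fD w) * fD z₀) := by
            rw [Complex.normSq_eq_norm_sq, Complex.normSq_eq_norm_sq]
            nlinarith [hstep2, norm_nonneg (1 - fD z₀),
              norm_nonneg (1 - (starRingEnd ℂ) (fD w) * fD z₀)]
          -- F2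
          have F2 : 1 - normSq (fD w) ≤ 2*C*M*(1 - normSq w) := by
            have hb1 : norm (fD w) ≤ 1 := (hcase w hwb).le
            have h1 : 1 - norm (fD w) ≤ norm (1 - fD w) := by
              have := norm_sub_norm_le (1:ℂ) (fD w)
              simpa using this
            have h2 : 1 - normSq (fD w) ≤ 2*(1 - norm (fD w)) := by
              rw [Complex.normSq_eq_norm_sq]
              nlinarith [norm_nonneg (fD w)]
            have h3 : 1 - norm w ≤ 1 - normSq w := by
              rw [Complex.normSq_eq_norm_sq]
              nlinarith [norm_nonneg w, habsw.le]
            have p1 : C * norm (ζ - w) ≤ C * (M*(1 - norm w)) :=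
              mul_le_mul_of_nonneg_left hstw.le hC.le
            have p2 : C*M*(1 - norm w) ≤ C*M*(1 - normSq w) :=
              mul_le_mul_of_nonneg_left h3 (by positivity)
            nlinarith [hcon]
          -- F3
          have F3 : normSq (1 - (starRingEnd ℂ) w * z₀) ≤ 4 * normSq (ζ - z₀) := by
            have e : (1:ℂ) - (starRingEnd ℂ) w * z₀
                = (starRingEnd ℂ) ζ * (ζ - z₀) + (starRingEnd ℂ) (ζ - w) * z₀ := by
              rw [map_sub]
              linear_combination -hconjζ
            have e1 : norm ((starRingEnd ℂ) ζ * (ζ - z₀)) = norm (ζ - z₀) := by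
              rw [norm_mul, Complex.norm_conj, hζ, one_mul]
            have e2 : norm ((starRingEnd ℂ) (ζ - w) * z₀) ≤ norm (ζ - z₀) := by
              rw [norm_mul, Complex.norm_conj]
              calc norm (ζ - w) * norm z₀ ≤ norm (ζ - w) * 1 :=
                    mul_le_mul_of_nonneg_left (hb z₀ hz₀b).le (norm_nonneg _)
                _ = norm (ζ - w) := mul_one _
                _ ≤ r := hdistw.le
                _ ≤ norm (ζ - z₀) := min_le_right _ _
            have e4 : norm (1 - (starRingEnd ℂ) w * z₀) ≤ 2 * norm (ζ - z₀) := by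
              rw [e]
              refine le_trans (norm_add_le _ _) ?_
              rw [e1]
              linarith
            rw [Complex.normSq_eq_norm_sq, Complex.normSq_eq_norm_sq]
            nlinarith [norm_nonneg (1 - (starRingEnd ℂ) w * z₀), habsz₀.le]
          -- contradiction
          have s1 : (1 - normSq (fD w)) * normSq (1 - (starRingEnd ℂ) w * z₀)
              ≤ (2*C*M*(1 - normSq w)) * (4 * normSq (ζ - z₀)) :=
            mul_le_mul F2 F3 (normSq_nonneg _) (by positivity)
          have t1 : (1 - normSq z₀) * (1 - normSq w) * normSq (1 - fD z₀)
              ≤ 4 * ((1 - normSq z₀) * (1 - normSq w)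
                * normSq (1 - (starRingEnd ℂ) (fD w) * fD z₀)) := by
            nlinarith [F1, mul_pos hPpos hQpos]
          have t3 : (1 - normSq (fD z₀)) * ((1 - normSq (fD w)) * normSq (1 - (starRingEnd ℂ) w * z₀))
              ≤ (1 - normSq (fD z₀)) * ((2*C*M*(1 - normSq w)) * (4 * normSq (ζ - z₀))) :=
            mul_le_mul_of_nonneg_left s1 hRpos.le
          have t4 : (1 - normSq z₀) * normSq (1 - fD z₀) * (1 - normSq w)
              ≤ 32*C*M*((1 - normSq (fD z₀)) * normSq (ζ - z₀)) * (1 - normSq w) := by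
            nlinarith [SP, t1, t3]
          have t5 : (1 - normSq z₀) * normSq (1 - fD z₀)
              ≤ 32*C*M*((1 - normSq (fD z₀)) * normSq (ζ - z₀)) :=
            le_of_mul_le_mul_right t4 hQpos
          have t6 : 0 < C*M*((1 - normSq (fD z₀)) * normSq (ζ - z₀)) := by positivity
          nlinarith [hu3, t5, t6]
        -- conclude
        have hfD1 : norm (1 + fD w) ≤ 2 := by
          refine le_trans (norm_add_le _ _) ?_
          have := (hcase w hwb).le
          simp only [norm_one]
          linarith
        have hY : 0 < norm (1 - fD w) :=
          lt_of_le_of_lt (by positivity) hkeyC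
        have hGfw : norm (Gf w) ≤ 2 / norm (1 - fD w) := by
          rw [hGf_eq w hwb, norm_div]
          exact (div_le_div_iff_of_pos_right hY).2 hfD1
        show ‖(ζ - w) * Gf w‖ < ε
        rw [norm_mul]
        have hCε : C * ε = 2 := by rw [hC_def]; field_simp
        have u1 : norm (ζ - w) * norm (Gf w)
            ≤ norm (ζ - w) * (2 / norm (1 - fD w)) :=
          mul_le_mul_of_nonneg_left hGfw (norm_nonneg _)
        have u2 : norm (ζ - w) * (2 / norm (1 - fD w)) < ε := by
          have hform : norm (ζ - w) * (2 / norm (1 - fD w))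
              = (norm (ζ - w) * 2) / norm (1 - fD w) := by ring
          rw [hform, div_lt_iff₀ hY]
          nlinarith [hkeyC, hε]
        linarith
      exact hmem
  -- final assembly
  have hval : (ℓ:ℂ)/2 * (starRingEnd ℂ) ζ * (ζ + ζ) = (ℓ:ℂ) := by
    linear_combination (ℓ:ℂ) * hconjζ
  have t2 : Tendsto (fun z : ℂ => (ℓ:ℂ)/2 * (starRingEnd ℂ) ζ * (ζ + z))
      (nhdsWithin ζ (StolzAngle ζ M)) (nhds ((ℓ:ℂ))) := by
    have hcont : Continuous fun z : ℂ => (ℓ:ℂ)/2 * (starRingEnd ℂ) ζ * (ζ + z) :=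
      continuous_const.mul (continuous_const.add continuous_id)
    have h1 := (hcont.tendsto ζ).mono_left (nhdsWithin_le_nhds (s := StolzAngle ζ M))
    rwa [hval] at h1
  have t1 : Tendsto (fun z : ℂ => (1/2:ℂ) * (starRingEnd ℂ) ζ * ((ζ - z) * Gf z))
      (nhdsWithin ζ (StolzAngle ζ M)) (nhds 0) := by
    have h1 := hKEY.const_mul ((1/2:ℂ) * (starRingEnd ℂ) ζ)
    simpa using h1
  have hsum := t1.add t2
  rw [zero_add] at hsum
  refine hsum.congr' ?_
  filter_upwards [self_mem_nhdsWithin] with z hzS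
  have hzb := hstolz_ball z hzS
  have hne := hζz z hzb
  have hone : (1:ℂ) - (starRingEnd ℂ) ζ * z = (starRingEnd ℂ) ζ * (ζ - z) := by
    linear_combination -hconjζ
  have hgz : g z = Gf z + (ℓ:ℂ) * ((ζ + z)/(ζ - z)) := by
    simp only [hGf_def]; ring
  show (1/2:ℂ) * (starRingEnd ℂ) ζ * ((ζ - z) * Gf z)
      + (ℓ:ℂ)/2 * (starRingEnd ℂ) ζ * (ζ + z)
      = (1/2:ℂ) * (1 - (starRingEnd ℂ) ζ * z) * g z
  rw [hgz, hone]
  field_simp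
end
end

section
/- Let f(z) = −(1 − z)²·p(z) where p is holomorphic on 𝔻 with Re p(z) ≥ 0 for all z ∈ 𝔻 (so f is a holomorphic generator with Denjoy–Wolff point a = 1), and let ζ ∈ ∂𝔻 with ζ ≠ 1 be a boundary regular null point of f with angular derivative f'(ζ) = ∠lim_{z→ζ} f(z)/(z − ζ) a negative real number. Define G(z) = 1/f(z) − (1/|f'(ζ)|)·(1/(z − 1) − 1/(z − ζ)) for z ∈ 𝔻 with f(z) ≠ 0. Then Re(−(z − 1)²·G(z)) ≥ 0 for all z ∈ 𝔻 with f(z) ≠ 0 (so, unless G vanishes identically, h := 1/G is again a holomorphic generator with Denjoy–Wolff point 1), and the angular limit ∠lim_{z→ζ} (z − ζ)·G(z) = 0 (equivalently, ∠lim_{z→ζ} h(z)/(z − ζ) = ∞, so ζ is not a boundary regular null point of h). -/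
open Complex Filter Metric Finset
open Topology ComplexConjugate

noncomputable section

lemma mem_ball_iff_normSq {z : ℂ} : z ∈ ball (0:ℂ) 1 ↔ normSq z < 1 := by
  rw [mem_ball_zero_iff, ← Complex.sq_norm]
  constructor
  · intro h; nlinarith [norm_nonneg z]
  · intro h; nlinarith [norm_nonneg z]

/-- key Möbius identity -/
lemma nsq_mob_id (b u : ℂ) :
    normSq (1 + conj b * u) - normSq (u + b) = (1 - normSq b) * (1 - normSq u) := by
  simp only [Complex.normSq_apply, Complex.add_re, Complex.add_im, Complex.mul_re,
    Complex.mul_im, Complex.one_re, Complex.one_im, Complex.conj_re, Complex.conj_im]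
  ring

lemma mob_den_ne {b u : ℂ} (hb : normSq b < 1) (hu : normSq u < 1) :
    1 + conj b * u ≠ 0 := by
  intro h
  have h1 : conj b * u = -1 := by linear_combination h
  have h2 : normSq (conj b * u) = 1 := by rw [h1]; simp
  rw [map_mul, Complex.normSq_conj] at h2
  nlinarith [Complex.normSq_nonneg b, Complex.normSq_nonneg u]

/-- The Möbius map of the disk sending `0` to `b`. -/
def mob (b u : ℂ) : ℂ := (u + b) / (1 + conj b * u)

lemma mob_mem {b u : ℂ} (hb : normSq b < 1) (hu : normSq u < 1) :
    normSq (mob b u) < 1 := by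
  rw [show mob b u = (u + b)/(1 + conj b * u) from rfl, map_div₀, div_lt_one (Complex.normSq_pos.2 (mob_den_ne hb hu))]
  nlinarith [nsq_mob_id b u]

lemma mob_inv {b a : ℂ} (hb : normSq b < 1) (ha : normSq a < 1) :
    mob b (mob (-b) a) = a := by
  have hnb : normSq (-b) < 1 := by rwa [Complex.normSq_neg]
  have d1 : 1 + conj (-b) * a ≠ 0 := mob_den_ne hnb ha
  have d2 : 1 + conj b * mob (-b) a ≠ 0 := mob_den_ne hb (mob_mem hnb ha)
  simp only [mob, map_neg] at d1 d2 ⊢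
  have e : 1 + (starRingEnd ℂ) b * ((a + -b) / (1 + -(starRingEnd ℂ) b * a)) =
      (1 + -(starRingEnd ℂ) b * a + (starRingEnd ℂ) b * (a + -b)) / (1 + -(starRingEnd ℂ) b * a) := by
    conv_rhs => rw [add_div, div_self d1, mul_div_assoc]
  have dd : 1 + -(starRingEnd ℂ) b * a + (starRingEnd ℂ) b * (a + -b) ≠ 0 := by
    intro h
    exact d2 (by rw [e, h, zero_div])
  rw [div_add' _ _ _ d1, e, div_div_div_comm, div_self d1, div_one, div_eq_iff dd]
  ring

lemma abs_lt_one_iff_normSq {z : ℂ} : ‖z‖ < 1 ↔ normSq z < 1 := by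
  rw [← mem_ball_zero_iff]; exact mem_ball_iff_normSq

lemma mob_eq (B v : ℂ) : mob (-B) v = (v - B) / (1 - conj B * v) := by
  simp [mob, sub_eq_add_neg]

/-- The Schwarz–Pick lemma for self-maps of the unit disk. -/
lemma schwarz_pick {w : ℂ → ℂ} (hd : DifferentiableOn ℂ w (ball 0 1))
    (hmaps : Set.MapsTo w (ball 0 1) (ball 0 1)) {a b : ℂ}
    (ha : normSq a < 1) (hb : normSq b < 1) :
    ‖w a - w b‖ * ‖1 - conj b * a‖ ≤
      ‖a - b‖ * ‖1 - conj (w b) * w a‖ := by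
  have ha' : a ∈ ball (0:ℂ) 1 := mem_ball_iff_normSq.2 ha
  have hb' : b ∈ ball (0:ℂ) 1 := mem_ball_iff_normSq.2 hb
  have hwa : normSq (w a) < 1 := mem_ball_iff_normSq.1 (hmaps ha')
  have hwb : normSq (w b) < 1 := mem_ball_iff_normSq.1 (hmaps hb')
  have hnwb : normSq (-(w b)) < 1 := by rwa [Complex.normSq_neg]
  have hnb : normSq (-b) < 1 := by rwa [Complex.normSq_neg]
  set g : ℂ → ℂ := fun u => mob (-(w b)) (w (mob b u)) with hgdef
  have hφmaps : Set.MapsTo (mob b) (ball 0 1) (ball (0:ℂ) 1) := fun u hu =>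
    mem_ball_iff_normSq.2 (mob_mem hb (mem_ball_iff_normSq.1 hu))
  have hφdiff : DifferentiableOn ℂ (mob b) (ball 0 1) := by
    have : mob b = fun u => (u + b) / (1 + conj b * u) := rfl
    rw [this]
    exact DifferentiableOn.div (differentiable_id.add_const b).differentiableOn
      ((differentiableOn_const _).add ((differentiableOn_const _).mul differentiable_id.differentiableOn))
      (fun u hu => mob_den_ne hb (mem_ball_iff_normSq.1 hu))
  have hWdiff : DifferentiableOn ℂ (fun u => w (mob b u)) (ball 0 1) :=
    hd.comp hφdiff hφmaps
  have hWmaps : ∀ u ∈ ball (0:ℂ) 1, normSq (w (mob b u)) < 1 := fun u hu =>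
    mem_ball_iff_normSq.1 (hmaps (hφmaps hu))
  have hgdiff : DifferentiableOn ℂ g (ball 0 1) := by
    have : g = fun u => (w (mob b u) + -(w b)) / (1 + conj (-(w b)) * w (mob b u)) := rfl
    rw [this]
    exact DifferentiableOn.div (hWdiff.add_const _)
      ((differentiableOn_const _).add ((differentiableOn_const _).mul hWdiff))
      (fun u hu => mob_den_ne hnwb (hWmaps u hu))
  have hgmaps : Set.MapsTo g (ball 0 1) (ball (0:ℂ) 1) := fun u hu =>
    mem_ball_iff_normSq.2 (mob_mem hnwb (hWmaps u hu))
  have hg0 : g 0 = 0 := by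
    have h0 : mob b 0 = b := by simp [mob]
    simp [hgdef, h0, mob]
  have hu : ‖mob (-b) a‖ < 1 := abs_lt_one_iff_normSq.2 (mob_mem hnb ha)
  have hS := Complex.norm_le_norm_of_mapsTo_ball hgdiff (hgmaps.mono_right ball_subset_closedBall) hg0 hu
  have hga : g (mob (-b) a) = mob (-(w b)) (w a) := by rw [hgdef]; simp only [mob_inv hb ha]
  rw [hga, mob_eq, mob_eq] at hS
  have hD1 : 1 - conj b * a ≠ 0 := by
    have := mob_den_ne hnb ha; rwa [map_neg, neg_mul, ← sub_eq_add_neg] at this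
  have hD2 : 1 - conj (w b) * w a ≠ 0 := by
    have := mob_den_ne hnwb hwa; rwa [map_neg, neg_mul, ← sub_eq_add_neg] at this
  rw [norm_div, norm_div,
    div_le_div_iff₀ (norm_pos_iff.2 hD2) (norm_pos_iff.2 hD1)] at hS
  exact hS

/-- The Schwarz–Pick lemma, invariant "horocycle" form. -/
lemma schwarz_pick_nsq {w : ℂ → ℂ} (hd : DifferentiableOn ℂ w (ball 0 1))
    (hmaps : Set.MapsTo w (ball 0 1) (ball 0 1)) {a b : ℂ}
    (ha : normSq a < 1) (hb : normSq b < 1) :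
    (1 - normSq a) * (1 - normSq b) * normSq (1 - conj (w b) * w a) ≤
      (1 - normSq (w a)) * (1 - normSq (w b)) * normSq (1 - conj b * a) := by
  have h := schwarz_pick hd hmaps ha hb
  have hwa : normSq (w a) < 1 := mem_ball_iff_normSq.1 (hmaps (mem_ball_iff_normSq.2 ha))
  have hwb : normSq (w b) < 1 := mem_ball_iff_normSq.1 (hmaps (mem_ball_iff_normSq.2 hb))
  have hs := pow_le_pow_left₀ (by positivity) h 2
  simp only [mul_pow, ← Complex.normSq_eq_norm_sq] at hs
  have i1 : normSq (1 - conj b * a) - normSq (a - b) = (1 - normSq b) * (1 - normSq a) := by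
    have := nsq_mob_id (-b) a
    rw [map_neg, neg_mul, ← sub_eq_add_neg, Complex.normSq_neg] at this
    rw [← this]
    congr 2
  have i2 : normSq (1 - conj (w b) * w a) - normSq (w a - w b) =
      (1 - normSq (w b)) * (1 - normSq (w a)) := by
    have := nsq_mob_id (-(w b)) (w a)
    rw [map_neg, neg_mul, ← sub_eq_add_neg, Complex.normSq_neg] at this
    rw [← this]
    congr 2
  nlinarith [hs, i1, i2, Complex.normSq_nonneg (1 - conj b * a),
    Complex.normSq_nonneg (1 - conj (w b) * w a), Complex.normSq_nonneg (a - b),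
    Complex.normSq_nonneg (w a - w b)]


lemma nsq_one_add_mul (c : ℝ) (q : ℂ) :
    normSq (1 + (c:ℂ) * q) = 1 + 2*c*q.re + c^2 * normSq q := by
  simp only [Complex.normSq_apply, Complex.add_re, Complex.add_im, Complex.mul_re,
    Complex.mul_im, Complex.one_re, Complex.one_im, Complex.ofReal_re, Complex.ofReal_im]
  ring

lemma nsq4 (q : ℂ) : normSq (q + 1) - normSq (q - 1) = 4 * q.re := by
  simp only [Complex.normSq_apply, Complex.add_re, Complex.add_im, Complex.sub_re,
    Complex.sub_im, Complex.one_re, Complex.one_im]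
  ring

lemma reK {ζ z : ℂ} (hnζ : normSq ζ = 1) (hzζ : z ≠ ζ) :
    ((ζ + z)/(ζ - z)).re = (1 - normSq z)/normSq (ζ - z) := by
  have hd : ζ - z ≠ 0 := sub_ne_zero.2 (Ne.symm hzζ)
  have hn : normSq (ζ - z) ≠ 0 := normSq_pos.2 hd |>.ne'
  rw [Complex.div_re, ← add_div]
  congr 1
  simp only [Complex.normSq_apply, Complex.add_re, Complex.add_im, Complex.sub_re,
    Complex.sub_im] at hnζ ⊢
  nlinarith [hnζ]

lemma nsq_one_sub_conj_mul {ζ z : ℂ} (hnζ : normSq ζ = 1) :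
    normSq (1 - conj ζ * z) = normSq (ζ - z) := by
  have h : 1 - conj ζ * z = conj ζ * (ζ - z) := by
    rw [mul_sub]
    congr 1
    rw [← Complex.normSq_eq_conj_mul_self, hnζ]
    norm_num
  rw [h, Complex.normSq_mul, Complex.normSq_conj, hnζ, one_mul]

lemma hHa_aux (pz Gz fz : ℂ) (m : ℝ) (z ζ : ℂ) (hpz : pz ≠ 0) (hm0 : (m:ℂ) ≠ 0)
    (hz1' : z - 1 ≠ 0) (hzζ' : z - ζ ≠ 0) (h1z : (1:ℂ) - z ≠ 0)
    (hfz : fz = -(1 - z)^2 * pz)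
    (hGz : Gz = 1/fz - 1/(-(m:ℂ)) * (1/(z - 1) - 1/(z - ζ))) :
    -(z - 1)^2 * Gz = 1/pz + (1/(-(m:ℂ)))*((z - 1)*(1 - ζ)/(z - ζ)) := by
  rw [hGz, hfz]
  field_simp
  ring

lemma hHb_aux (m σ : ℝ) (z ζ : ℂ) (hm0 : (m:ℂ) ≠ 0)
    (hzζ' : z - ζ ≠ 0) (hζz : ζ - z ≠ 0)
    (hζc : ζ * conj ζ = 1)
    (hσc : ((σ:ℝ):ℂ) = (1 - ζ)*(1 - conj ζ)/(2*(-(m:ℂ)))) :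
    (1/(-(m:ℂ)))*((z - 1)*(1 - ζ)/(z - ζ))
        = -(((σ:ℝ):ℂ)*((ζ + z)/(ζ - z))) + (1/(2*(-(m:ℂ))))*(conj ζ - ζ) := by
  rw [hσc]
  field_simp
  ring_nf
  linear_combination (2*z - z^2 - 2*ζ + ζ^2) * hζc

set_option maxHeartbeats 4000000 in
/-- reduced (N = 1) separation step for a generator with
Denjoy–Wolff point 1. -/
theorem stmt1 (p : ℂ → ℂ)
    (hp : DifferentiableOn ℂ p (ball (0:ℂ) 1))
    (hre : ∀ z ∈ ball (0:ℂ) 1, 0 ≤ (p z).re)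
    (f : ℂ → ℂ) (hf : ∀ z, f z = -(1 - z)^2 * p z)
    (ζ : ℂ) (hζ : ‖ζ‖ = 1) (hζ1 : ζ ≠ 1)
    (m : ℝ) (hm : m < 0)
    (hder : AngularLimit (fun z => f z / (z - ζ)) ζ (m : ℂ))
    (G : ℂ → ℂ)
    (hG : ∀ z, G z = 1 / f z - (1 / ((|m| : ℝ) : ℂ)) * (1 / (z - 1) - 1 / (z - ζ))) :
    (∀ z ∈ ball (0:ℂ) 1, f z ≠ 0 → 0 ≤ (-(z - 1)^2 * G z).re) ∧
      AngularLimit (fun z => (z - ζ) * G z) ζ 0 := by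
  have hm0 : (m:ℂ) ≠ 0 := by exact_mod_cast hm.ne
  have habs : ((|m| : ℝ) : ℂ) = -(m : ℂ) := by rw [abs_of_neg hm]; push_cast; ring
  have habs0 : ((|m| : ℝ) : ℂ) ≠ 0 := by rw [habs]; simpa using hm0
  have hζ0 : ζ ≠ 0 := by intro h; rw [h] at hζ; simp at hζ
  have hnζ : normSq ζ = 1 := by rw [Complex.normSq_eq_norm_sq, hζ]; norm_num
  have hζc : ζ * conj ζ = 1 := by rw [Complex.mul_conj, hnζ]; norm_num
  -- the radial approach filter
  have hLne : (𝓝[<] (1:ℝ)).NeBot := inferInstance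
  set γ : ℝ → ℂ := fun r => (r:ℂ) * ζ with hγdef
  have hIoo : ∀ᶠ r in 𝓝[<] (1:ℝ), r ∈ Set.Ioo (0:ℝ) 1 :=
    Ioo_mem_nhdsLT_of_mem ⟨zero_lt_one, le_refl 1⟩
  have hγmem : ∀ r ∈ Set.Ioo (0:ℝ) 1, γ r ∈ StolzAngle ζ 2 := by
    intro r hr
    constructor
    · simp only [hγdef, norm_mul, Complex.norm_real, Real.norm_eq_abs, hζ, mul_one]
      rw [abs_of_pos hr.1]; exact hr.2
    · have : ζ - γ r = (1 - (r:ℂ)) * ζ := by rw [hγdef]; ring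
      rw [this]
      simp only [norm_mul, Complex.norm_real, Real.norm_eq_abs, hζ, mul_one, hγdef]
      rw [show (1:ℂ) - (r:ℝ) = ((1 - r : ℝ) : ℂ) by push_cast; ring]
      rw [Complex.norm_real, Real.norm_eq_abs, abs_of_pos (by linarith [hr.2] : (0:ℝ) < 1 - r),
        abs_of_pos hr.1]
      linarith [hr.2]
  have hγball : ∀ r ∈ Set.Ioo (0:ℝ) 1, γ r ∈ ball (0:ℂ) 1 := by
    intro r hr
    rw [mem_ball_zero_iff, hγdef]
    simp only [norm_mul, Complex.norm_real, Real.norm_eq_abs, hζ, mul_one]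
    rw [abs_of_pos hr.1]; exact hr.2
  have hγS : Tendsto γ (𝓝[<] (1:ℝ)) (𝓝[StolzAngle ζ 2] ζ) := by
    rw [tendsto_nhdsWithin_iff]
    constructor
    · have hcont : Continuous (fun r : ℝ => (r:ℂ) * ζ) :=
        Complex.continuous_ofReal.mul continuous_const
      have : Tendsto γ (𝓝 (1:ℝ)) (𝓝 ζ) := by simpa [hγdef] using hcont.tendsto 1
      exact this.mono_left nhdsWithin_le_nhds
    · exact hIoo.mono fun r hr => hγmem r hr
  have hrad : Tendsto (fun r => f (γ r) / (γ r - ζ)) (𝓝[<] (1:ℝ)) (𝓝 (m:ℂ)) :=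
    (hder 2 one_lt_two).comp hγS
  -- Part 2
  have part2 : AngularLimit (fun z => (z - ζ) * G z) ζ 0 := by
    intro M hM
    have hkey : ∀ z ∈ StolzAngle ζ M,
        (z - ζ) * G z = (f z / (z - ζ))⁻¹ -
          (1 / ((|m| : ℝ) : ℂ)) * ((z - ζ)/(z - 1)) + 1 / ((|m| : ℝ) : ℂ) := by
      intro z hz
      have hzζ : z - ζ ≠ 0 := by
        rw [sub_ne_zero]; intro h
        have h1 := hz.1
        rw [h, hζ] at h1
        exact lt_irrefl 1 h1
      have h1 : (z - ζ) * (1/(z - ζ)) = 1 := by rw [mul_one_div, div_self hzζ]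
      rw [hG z, inv_div]
      linear_combination (1 / ((|m| : ℝ) : ℂ)) * h1
    have t1 : Tendsto (fun z => (f z / (z - ζ))⁻¹) (𝓝[StolzAngle ζ M] ζ) (𝓝 ((m:ℂ))⁻¹) :=
      (hder M hM).inv₀ hm0
    have t2 : Tendsto (fun z => (z - ζ)/(z - 1)) (𝓝[StolzAngle ζ M] ζ) (𝓝 0) := by
      have hc : ContinuousAt (fun z : ℂ => (z - ζ)/(z - 1)) ζ := by
        apply ContinuousAt.div
        · exact continuousAt_id.sub continuousAt_const
        · exact continuousAt_id.sub continuousAt_const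
        · exact sub_ne_zero.2 hζ1
      have t2' : Tendsto (fun z : ℂ => (z - ζ)/(z - 1)) (𝓝[StolzAngle ζ M] ζ)
          (𝓝 ((ζ - ζ)/(ζ - 1))) :=
        hc.tendsto.mono_left nhdsWithin_le_nhds
      simpa using t2'
    have t3 : Tendsto (fun z => (f z / (z - ζ))⁻¹ -
        (1 / ((|m| : ℝ) : ℂ)) * ((z - ζ)/(z - 1)) + 1 / ((|m| : ℝ) : ℂ))
        (𝓝[StolzAngle ζ M] ζ)
        (𝓝 ((m:ℂ)⁻¹ - (1 / ((|m| : ℝ) : ℂ)) * 0 + 1 / ((|m| : ℝ) : ℂ))) :=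
      (t1.sub (t2.const_mul _)).add_const _
    have hval : (m:ℂ)⁻¹ - (1 / ((|m| : ℝ) : ℂ)) * 0 + 1 / ((|m| : ℝ) : ℂ) = 0 := by
      rw [habs]; field_simp; ring
    rw [hval] at t3
    refine t3.congr' ?_
    filter_upwards [eventually_mem_nhdsWithin] with z hz
    exact (hkey z hz).symm
  -- case split on zeros of p
  by_cases hcase : ∀ u ∈ ball (0:ℂ) 1, p u ≠ 0

  · -- main case: p never vanishes
    refine ⟨?_, part2⟩
    set σ : ℝ := normSq (1 - ζ) / (2 * (-m)) with hσdef
    have hσpos : 0 < σ :=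
      div_pos (Complex.normSq_pos.2 (sub_ne_zero.2 (Ne.symm hζ1))) (by linarith)
    have hq1re : ∀ u ∈ ball (0:ℂ) 1, 0 ≤ (1/p u).re := by
      intro u hu
      rw [one_div, Complex.inv_re]
      exact div_nonneg (hre u hu) (Complex.normSq_nonneg _)
    have hq1 : ∀ ε : ℝ, 0 < ε → ∀ u ∈ ball (0:ℂ) 1, 1/p u + (ε:ℂ) + 1 ≠ 0 := by
      intro ε hε u hu h
      have h0 := congrArg Complex.re h
      simp at h0
      linarith [div_nonneg (hre u hu) (Complex.normSq_nonneg (p u))]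
    have key1 : ∀ ε : ℝ, 0 < ε → ∀ z ∈ ball (0:ℂ) 1,
        σ * (1 - normSq z) ≤ ((1/p z).re + ε) * normSq (ζ - z) := by
      intro ε hε z hz
      set w : ℂ → ℂ := fun u => (1 + ((ε:ℂ) - 1) * p u) / (1 + ((ε:ℂ) + 1) * p u) with hwdef
      have hden : ∀ u ∈ ball (0:ℂ) 1, 1 + ((ε:ℂ) + 1) * p u ≠ 0 := by
        intro u hu h
        have h0 := congrArg Complex.re h
        have hc : (1:ℂ) + ((ε:ℂ) + 1) * p u = 1 + ((ε + 1 : ℝ):ℂ) * p u := by push_cast; ring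
        rw [hc] at h0
        simp only [Complex.add_re, Complex.one_re, Complex.re_ofReal_mul, Complex.zero_re] at h0
        nlinarith [hre u hu]
      have hwdiff : DifferentiableOn ℂ w (ball 0 1) := by
        apply DifferentiableOn.div
        · exact (differentiableOn_const _).add ((differentiableOn_const _).mul hp)
        · exact (differentiableOn_const _).add ((differentiableOn_const _).mul hp)
        · exact hden
      have hwmaps : Set.MapsTo w (ball 0 1) (ball (0:ℂ) 1) := by
        intro u hu
        rw [mem_ball_iff_normSq]
        show normSq ((1 + ((ε:ℂ) - 1) * p u) / (1 + ((ε:ℂ) + 1) * p u)) < 1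
        rw [map_div₀, div_lt_one (Complex.normSq_pos.2 (hden u hu))]
        have hc1 : (1:ℂ) + ((ε:ℂ) - 1) * p u = 1 + ((ε - 1 : ℝ):ℂ) * p u := by push_cast; ring
        have hc2 : (1:ℂ) + ((ε:ℂ) + 1) * p u = 1 + ((ε + 1 : ℝ):ℂ) * p u := by push_cast; ring
        rw [hc1, hc2, nsq_one_add_mul, nsq_one_add_mul]
        have h1 := Complex.normSq_pos.2 (hcase u hu)
        nlinarith [hre u hu]
      have hwq : ∀ u ∈ ball (0:ℂ) 1, w u = (1/p u + (ε:ℂ) - 1)/(1/p u + (ε:ℂ) + 1) := by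
        intro u hu
        show (1 + ((ε:ℂ) - 1) * p u) / (1 + ((ε:ℂ) + 1) * p u)
          = (1/p u + (ε:ℂ) - 1)/(1/p u + (ε:ℂ) + 1)
        rw [div_eq_div_iff (hden u hu) (hq1 ε hε u hu)]
        field_simp [hcase u hu]
        ring
      have hI1 : ∀ u ∈ ball (0:ℂ) 1,
          (1 - normSq (w u)) * normSq (1/p u + (ε:ℂ) + 1) = 4 * ((1/p u).re + ε) := by
        intro u hu
        have hq := hq1 ε hε u hu
        have hns : normSq (1/p u + (ε:ℂ) + 1) ≠ 0 := (Complex.normSq_pos.2 hq).ne'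
        have h1 : normSq (w u) * normSq (1/p u + (ε:ℂ) + 1) = normSq (1/p u + (ε:ℂ) - 1) := by
          rw [hwq u hu, map_div₀, div_mul_cancel₀ _ hns]
        have h2 := nsq4 (1/p u + (ε:ℂ))
        have h3 : (1/p u + (ε:ℂ)).re = (1/p u).re + ε := by
          simp [Complex.add_re, Complex.ofReal_re]
        rw [h3] at h2
        have e1 : (1/p u + (ε:ℂ)) + 1 = 1/p u + (ε:ℂ) + 1 := by ring
        have e2 : (1/p u + (ε:ℂ)) - 1 = 1/p u + (ε:ℂ) - 1 := by ring
        rw [e1, e2] at h2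
        rw [sub_mul, one_mul, h1]
        linarith
      have hI2 : ∀ u ∈ ball (0:ℂ) 1, (1 - w u) * (1/p u + (ε:ℂ) + 1) = 2 := by
        intro u hu
        rw [hwq u hu]
        have hq := hq1 ε hε u hu
        field_simp
        ring
      set T : ℝ → ℂ := fun r => (1 - γ r)^2 * (f (γ r) / (γ r - ζ))⁻¹ with hTdef
      set Q : ℝ → ℂ := fun r => T r / ζ + (1 - (r:ℂ)) * (ε:ℂ) with hQdef
      set N : ℝ → ℂ := fun r => Q r + (1 - (r:ℂ)) with hNdef
      have hγn : Tendsto γ (𝓝[<] (1:ℝ)) (𝓝 ζ) := hγS.mono_right nhdsWithin_le_nhds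
      have hT : Tendsto T (𝓝[<] (1:ℝ)) (𝓝 ((1 - ζ)^2 * ((m:ℂ))⁻¹)) := by
        have h1 : Tendsto (fun r => (1 - γ r)^2) (𝓝[<] (1:ℝ)) (𝓝 ((1 - ζ)^2)) := by
          have hc : Continuous (fun u : ℂ => (1 - u)^2) := (continuous_const.sub continuous_id).pow 2
          exact (hc.tendsto ζ).comp hγn
        exact h1.mul (hrad.inv₀ hm0)
      have hns : ((normSq (1 - ζ) : ℝ):ℂ) = (1 - ζ) * (1 - conj ζ) := by
        rw [← Complex.mul_conj]; simp
      have hτ : (1 - ζ)^2 * ((m:ℂ))⁻¹ / ζ = ((2*σ : ℝ):ℂ) := by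
        rw [hσdef]
        push_cast
        rw [hns, div_eq_iff hζ0]
        field_simp
        ring_nf
        linear_combination (-1) * hζc
      have hQ : Tendsto Q (𝓝[<] (1:ℝ)) (𝓝 ((2*σ:ℝ):ℂ)) := by
        have h2 : Tendsto (fun r : ℝ => (1 - (r:ℂ)) * (ε:ℂ)) (𝓝[<] (1:ℝ)) (𝓝 0) := by
          have hc : Continuous (fun r : ℝ => (1 - (r:ℂ)) * (ε:ℂ)) :=
            (continuous_const.sub Complex.continuous_ofReal).mul continuous_const
          have h2' : Tendsto (fun r : ℝ => (1 - (r:ℂ)) * (ε:ℂ)) (𝓝[<] (1:ℝ))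
              (𝓝 ((1 - ((1:ℝ):ℂ)) * (ε:ℂ))) :=
            (hc.tendsto 1).mono_left nhdsWithin_le_nhds
          simpa using h2'
        have h3 := (hT.div_const ζ).add h2
        rw [add_zero, hτ] at h3
        exact h3
      have hQre : Tendsto (fun r => (Q r).re) (𝓝[<] (1:ℝ)) (𝓝 (2*σ)) := by
        have := (Complex.continuous_re.tendsto _).comp hQ
        simpa [Function.comp_def] using this
      have hN : Tendsto N (𝓝[<] (1:ℝ)) (𝓝 ((2*σ:ℝ):ℂ)) := by
        have h2 : Tendsto (fun r : ℝ => 1 - (r:ℂ)) (𝓝[<] (1:ℝ)) (𝓝 0) := by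
          have hc : Continuous (fun r : ℝ => 1 - (r:ℂ)) :=
            continuous_const.sub Complex.continuous_ofReal
          have h2' : Tendsto (fun r : ℝ => 1 - (r:ℂ)) (𝓝[<] (1:ℝ))
              (𝓝 (1 - ((1:ℝ):ℂ))) :=
            (hc.tendsto 1).mono_left nhdsWithin_le_nhds
          simpa using h2'
        have h3 := hQ.add h2
        rw [add_zero] at h3
        exact h3
      have hσℂ0 : ((2*σ:ℝ):ℂ) ≠ 0 := by
        rw [Complex.ofReal_ne_zero]; positivity
      have hQeq : ∀ r ∈ Set.Ioo (0:ℝ) 1, Q r = (1 - (r:ℂ)) * (1/p (γ r) + ε) := by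
        intro r hr
        have hpγ := hcase _ (hγball r hr)
        have h1γ : (1:ℂ) - γ r ≠ 0 := by
          intro h
          have hγ1 : γ r = 1 := by linear_combination -h
          have := hγball r hr
          rw [hγ1, mem_ball_zero_iff] at this
          norm_num at this
        have hrne : (r:ℂ) - 1 ≠ 0 := by
          rw [sub_ne_zero]
          exact_mod_cast hr.2.ne
        have hγζ : γ r - ζ ≠ 0 := by
          rw [hγdef]
          show (r:ℂ) * ζ - ζ ≠ 0
          rw [show (r:ℂ) * ζ - ζ = ((r:ℂ) - 1) * ζ from by ring]
          exact mul_ne_zero hrne hζ0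
        have hfγ : f (γ r) ≠ 0 := by
          rw [hf]
          exact mul_ne_zero (by simpa using pow_ne_zero 2 h1γ) hpγ
        rw [hQdef]
        show T r / ζ + (1 - (r:ℂ)) * (ε:ℂ) = (1 - (r:ℂ)) * (1/p (γ r) + ε)
        rw [hTdef]
        show (1 - γ r)^2 * (f (γ r) / (γ r - ζ))⁻¹ / ζ + (1 - (r:ℂ)) * (ε:ℂ)
          = (1 - (r:ℂ)) * (1/p (γ r) + ε)
        rw [inv_div, hf (γ r)]
        have hγr : γ r = (r:ℂ) * ζ := rfl
        rw [hγr] at h1γ ⊢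
        field_simp [hpγ, hζ0, h1γ]
        ring_nf
      have hNeq : ∀ r ∈ Set.Ioo (0:ℝ) 1, N r = (1 - (r:ℂ)) * (1/p (γ r) + ε + 1) := by
        intro r hr
        rw [hNdef]
        show Q r + (1 - (r:ℂ)) = (1 - (r:ℂ)) * (1/p (γ r) + ε + 1)
        rw [hQeq r hr]; ring
      have hr1 : ∀ r ∈ Set.Ioo (0:ℝ) 1, (1:ℂ) - (r:ℂ) ≠ 0 := by
        intro r hr h
        rw [sub_eq_zero] at h
        have : (1:ℝ) = r := by exact_mod_cast h
        exact hr.2.ne (this.symm)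
      have hN0 : ∀ r ∈ Set.Ioo (0:ℝ) 1, N r ≠ 0 := by
        intro r hr
        rw [hNeq r hr]
        exact mul_ne_zero (hr1 r hr) (hq1 ε hε _ (hγball r hr))
      have hWeq : ∀ r ∈ Set.Ioo (0:ℝ) 1, w (γ r) = 1 - 2*(1 - (r:ℂ))/N r := by
        intro r hr
        rw [hwq _ (hγball r hr), hNeq r hr]
        have hqγ := hq1 ε hε _ (hγball r hr)
        field_simp [hr1 r hr]
        ring
      have hW1 : Tendsto (fun r => w (γ r)) (𝓝[<] (1:ℝ)) (𝓝 1) := by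
        have hnum : Tendsto (fun r : ℝ => 2*(1 - (r:ℂ))) (𝓝[<] (1:ℝ)) (𝓝 0) := by
          have hc : Continuous (fun r : ℝ => 2*(1 - (r:ℂ))) :=
            continuous_const.mul (continuous_const.sub Complex.continuous_ofReal)
          have h2' : Tendsto (fun r : ℝ => 2*(1 - (r:ℂ))) (𝓝[<] (1:ℝ))
              (𝓝 (2*(1 - ((1:ℝ):ℂ)))) :=
            (hc.tendsto 1).mono_left nhdsWithin_le_nhds
          simpa using h2'
        have hdiv := hnum.div hN hσℂ0
        rw [zero_div] at hdiv
        have h4 : Tendsto (fun r : ℝ => 1 - 2*(1 - (r:ℂ))/N r) (𝓝[<] (1:ℝ)) (𝓝 (1 - 0)) :=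
          tendsto_const_nhds.sub hdiv
        rw [sub_zero] at h4
        refine Tendsto.congr' ?_ h4
        filter_upwards [hIoo] with r hr
        exact (hWeq r hr).symm
      have hE : Tendsto (fun r => 4*(Q r).re / normSq (N r)) (𝓝[<] (1:ℝ)) (𝓝 (2/σ)) := by
        have hd : Tendsto (fun r => normSq (N r)) (𝓝[<] (1:ℝ)) (𝓝 ((2*σ)*(2*σ))) := by
          have hd0 := (Complex.continuous_normSq.tendsto ((2*σ:ℝ):ℂ)).comp hN
          have he : normSq ((2*σ:ℝ):ℂ) = (2*σ)*(2*σ) := Complex.normSq_ofReal _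
          rw [he] at hd0
          exact hd0
        have hn : Tendsto (fun r => 4*(Q r).re) (𝓝[<] (1:ℝ)) (𝓝 (4*(2*σ))) :=
          hQre.const_mul 4
        have h5 := hn.div hd (by positivity)
        have hv : 4*(2*σ)/((2*σ)*(2*σ)) = 2/σ := by
          field_simp
          ring
        rw [hv] at h5
        exact h5
      have hnz : normSq z < 1 := mem_ball_iff_normSq.1 hz
      have hstep : ∀ r ∈ Set.Ioo (0:ℝ) 1,
          (1 - normSq z)*(1+r)*normSq (1 - conj (w (γ r)) * w z) ≤
            (4*(Q r).re/normSq (N r))*(1 - normSq (w z))*normSq (1 - ((r:ℂ) * conj ζ) * z) := by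
        intro r hr
        have hbγ : normSq (γ r) < 1 := mem_ball_iff_normSq.1 (hγball r hr)
        have SP := schwarz_pick_nsq hwdiff hwmaps hnz hbγ
        have hγc : conj (γ r) = (r:ℂ) * conj ζ := by
          rw [hγdef]
          show conj ((r:ℂ) * ζ) = (r:ℂ) * conj ζ
          rw [map_mul, Complex.conj_ofReal]
        have hγns : normSq (γ r) = r*r := by
          rw [hγdef]
          show normSq ((r:ℂ) * ζ) = r*r
          rw [map_mul, Complex.normSq_ofReal, hnζ, mul_one]
        rw [hγc, hγns] at SP
        have hQre2 : (Q r).re = (1-r)*((1/p (γ r)).re + ε) := by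
          rw [hQeq r hr, show (1:ℂ) - (r:ℂ) = ((1-r:ℝ):ℂ) from by push_cast; ring,
            Complex.re_ofReal_mul]
          congr 1
        have hnsN : normSq (N r) = (1-r)^2 * normSq (1/p (γ r) + ε + 1) := by
          rw [hNeq r hr, map_mul, show (1:ℂ) - (r:ℂ) = ((1-r:ℝ):ℂ) from by push_cast; ring,
            Complex.normSq_ofReal]
          ring
        have hWns : (1 - normSq (w (γ r))) * normSq (N r) = 4*(Q r).re*(1-r) := by
          rw [hnsN, hQre2]
          linear_combination (1-r)^2 * hI1 _ (hγball r hr)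
        have hnsN0 : normSq (N r) ≠ 0 := (Complex.normSq_pos.2 (hN0 r hr)).ne'
        have h1W : 1 - normSq (w (γ r)) = 4*(Q r).re*(1-r)/normSq (N r) := by
          rw [eq_div_iff hnsN0]; exact hWns
        have h1r : (0:ℝ) < 1 - r := by linarith [hr.2]
        refine le_of_mul_le_mul_right ?_ h1r
        calc (1 - normSq z)*(1+r)*normSq (1 - conj (w (γ r))*w z)*(1-r)
            = (1 - normSq z)*(1 - r*r)*normSq (1 - conj (w (γ r))*w z) := by ring
          _ ≤ (1 - normSq (w z))*(1 - normSq (w (γ r)))*normSq (1 - ((r:ℂ)*conj ζ)*z) := SP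
          _ = (4*(Q r).re/normSq (N r))*(1 - normSq (w z))*normSq (1 - ((r:ℂ)*conj ζ)*z)*(1-r) := by
              rw [h1W]; ring
      have hLHS : Tendsto (fun r => (1 - normSq z)*(1+r)*normSq (1 - conj (w (γ r)) * w z))
          (𝓝[<] (1:ℝ)) (𝓝 ((1 - normSq z)*2*normSq (1 - w z))) := by
        have h1 : Tendsto (fun r : ℝ => 1 + r) (𝓝[<] (1:ℝ)) (𝓝 2) := by
          have h1' : Tendsto (fun r : ℝ => 1 + r) (𝓝[<] (1:ℝ)) (𝓝 (1 + 1)) :=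
            ((continuous_const.add continuous_id).tendsto (1:ℝ)).mono_left
              nhdsWithin_le_nhds
          norm_num at h1'
          exact h1'
        have h2 : Tendsto (fun r => normSq (1 - conj (w (γ r)) * w z)) (𝓝[<] (1:ℝ))
            (𝓝 (normSq (1 - w z))) := by
          have hc : Continuous (fun x : ℂ => normSq (1 - conj x * w z)) :=
            Complex.continuous_normSq.comp
              (continuous_const.sub (Complex.continuous_conj.mul continuous_const))
          have := (hc.tendsto 1).comp hW1
          simpa [Function.comp_def] using this
        exact ((tendsto_const_nhds.mul h1).mul h2 :
          Tendsto (fun r : ℝ => ((1 - normSq z)*(1+r))*normSq (1 - conj (w (γ r)) * w z))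
            (𝓝[<] (1:ℝ)) (𝓝 (((1 - normSq z)*2)*normSq (1 - w z))))
      have hRHS : Tendsto (fun r => (4*(Q r).re/normSq (N r))*(1 - normSq (w z))
          *normSq (1 - ((r:ℂ) * conj ζ) * z)) (𝓝[<] (1:ℝ))
          (𝓝 ((2/σ)*(1 - normSq (w z))*normSq (1 - conj ζ * z))) := by
        have h3 : Tendsto (fun r : ℝ => normSq (1 - ((r:ℂ) * conj ζ) * z)) (𝓝[<] (1:ℝ))
            (𝓝 (normSq (1 - conj ζ * z))) := by
          have hc : Continuous (fun r : ℝ => normSq (1 - ((r:ℂ) * conj ζ) * z)) :=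
            Complex.continuous_normSq.comp (continuous_const.sub
              (((Complex.continuous_ofReal.mul continuous_const)).mul continuous_const))
          have h3' : Tendsto (fun r : ℝ => normSq (1 - ((r:ℂ) * conj ζ) * z)) (𝓝[<] (1:ℝ))
              (𝓝 (normSq (1 - ((((1:ℝ)):ℂ) * conj ζ) * z))) :=
            (hc.tendsto 1).mono_left nhdsWithin_le_nhds
          simpa using h3'
        exact (hE.mul tendsto_const_nhds).mul h3
      have hlim := le_of_tendsto_of_tendsto hLHS hRHS (hIoo.mono fun r hr => hstep r hr)
      have hq := hq1 ε hε z hz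
      have hXpos : 0 < normSq (1/p z + (ε:ℂ) + 1) := Complex.normSq_pos.2 hq
      have hI2n : normSq (1 - w z) * normSq (1/p z + (ε:ℂ) + 1) = 4 := by
        rw [← map_mul, hI2 z hz]
        norm_num [Complex.normSq_apply]
      have hI1z := hI1 z hz
      have hnn : normSq (1 - conj ζ * z) = normSq (ζ - z) := nsq_one_sub_conj_mul hnζ
      have hmul := mul_le_mul_of_nonneg_right hlim hXpos.le
      rw [hnn] at hmul
      have hA : (1 - normSq z)*2*normSq (1 - w z)*normSq (1/p z + (ε:ℂ) + 1)
          = 8*(1 - normSq z) := by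
        calc (1 - normSq z)*2*normSq (1 - w z)*normSq (1/p z + (ε:ℂ) + 1)
            = (1 - normSq z)*2*(normSq (1 - w z)*normSq (1/p z + (ε:ℂ) + 1)) := by ring
          _ = 8*(1 - normSq z) := by rw [hI2n]; ring
      have hB : (2/σ)*(1 - normSq (w z))*normSq (ζ - z)*normSq (1/p z + (ε:ℂ) + 1)
          = (2/σ)*(4*((1/p z).re + ε))*normSq (ζ - z) := by
        calc (2/σ)*(1 - normSq (w z))*normSq (ζ - z)*normSq (1/p z + (ε:ℂ) + 1)
            = (2/σ)*((1 - normSq (w z))*normSq (1/p z + (ε:ℂ) + 1))*normSq (ζ - z) := by ring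
          _ = (2/σ)*(4*((1/p z).re + ε))*normSq (ζ - z) := by rw [hI1z]
      rw [hA, hB] at hmul
      have hfin := mul_le_mul_of_nonneg_left hmul hσpos.le
      have hcanc : σ*((2/σ)*(4*((1/p z).re + ε))*normSq (ζ - z))
          = 8*(((1/p z).re + ε)*normSq (ζ - z)) := by
        field_simp
        ring
      rw [hcanc] at hfin
      linarith
    -- conclude part 1 from key1
    intro z hz hfz
    have hpz : p z ≠ 0 := hcase z hz
    have hzζ : z ≠ ζ := by
      intro h
      rw [h, mem_ball_zero_iff, hζ] at hz
      exact lt_irrefl 1 hz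
    have hz1 : z ≠ 1 := by
      intro h
      rw [h, mem_ball_zero_iff] at hz
      norm_num at hz
    have hζz : ζ - z ≠ 0 := sub_ne_zero.2 (Ne.symm hzζ)
    have hnsp : 0 < normSq (ζ - z) := Complex.normSq_pos.2 hζz
    have hfinal : σ * (1 - normSq z) ≤ (1/p z).re * normSq (ζ - z) := by
      refine le_of_forall_pos_le_add (fun ε hε => ?_)
      have hkey := key1 (ε / normSq (ζ - z)) (div_pos hε hnsp) z hz
      have he : ((1/p z).re + ε / normSq (ζ - z)) * normSq (ζ - z)
          = (1/p z).re * normSq (ζ - z) + ε := by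
        field_simp
      rw [he] at hkey
      exact hkey
    have hns : ((normSq (1 - ζ) : ℝ):ℂ) = (1 - ζ) * (1 - conj ζ) := by
      rw [← Complex.mul_conj]; simp
    have hσc : ((σ:ℝ):ℂ) = (1 - ζ)*(1 - conj ζ)/(2*(-(m:ℂ))) := by
      rw [hσdef]
      push_cast
      rw [hns]
    have hz1' : z - 1 ≠ 0 := sub_ne_zero.2 hz1
    have hzζ' : z - ζ ≠ 0 := sub_ne_zero.2 hzζ
    have h1z : (1:ℂ) - z ≠ 0 := fun h => hz1 (by linear_combination -h)
    have hHa : -(z - 1)^2 * G z = 1/p z + (1/(-(m:ℂ)))*((z - 1)*(1 - ζ)/(z - ζ)) :=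
      hHa_aux (p z) (G z) (f z) m z ζ hpz hm0 hz1' hzζ' h1z (hf z)
        (by rw [hG z, habs])
    have hHb : (1/(-(m:ℂ)))*((z - 1)*(1 - ζ)/(z - ζ))
        = -(((σ:ℝ):ℂ)*((ζ + z)/(ζ - z))) + (1/(2*(-(m:ℂ))))*(conj ζ - ζ) :=
      hHb_aux m σ z ζ hm0 hzζ' hζz hζc hσc
    have hH : -(z - 1)^2 * G z = 1/p z - ((σ:ℝ):ℂ)*((ζ + z)/(ζ - z))
        + (1/(2*(-(m:ℂ))))*(conj ζ - ζ) := by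
      rw [hHa, hHb]
      ring
    have hreH : (-(z - 1)^2 * G z).re
        = (1/p z).re - σ*((1 - normSq z)/normSq (ζ - z)) := by
      rw [hH, Complex.add_re, Complex.sub_re, Complex.re_ofReal_mul, reK hnζ hzζ]
      have hc0 : ((1/(2*(-(m:ℂ))))*(conj ζ - ζ)).re = 0 := by
        have h1 : (1/(2*(-(m:ℂ)))) = (((1/(2*(-m)) : ℝ)):ℂ) := by push_cast; ring
        rw [h1, Complex.re_ofReal_mul]
        simp [Complex.sub_re, Complex.conj_re]
      rw [hc0, add_zero]
    rw [hreH]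
    have hdiv : σ*((1 - normSq z)/normSq (ζ - z)) ≤ (1/p z).re := by
      rw [mul_div_assoc', div_le_iff₀ hnsp]
      linarith [hfinal]
    linarith

  · -- p has a zero, hence p ≡ 0, contradicting m < 0
    exfalso
    push_neg at hcase
    obtain ⟨z₀, hz₀, hpz₀⟩ := hcase
    have hre0 : (p z₀).re = 0 := by rw [hpz₀]; simp
    set g : ℂ → ℂ := fun u => Complex.exp (-p u) with hgdef
    have hgd : DifferentiableOn ℂ g (ball (0:ℂ) 1) := hp.neg.cexp
    have hmax : IsMaxOn (norm ∘ g) (ball (0:ℂ) 1) z₀ := by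
      intro u hu
      simp only [Function.comp, hgdef, Complex.norm_exp, Complex.neg_re]
      exact Real.exp_le_exp.2 (by simp [hre0]; linarith [hre u hu])
    have heq : Set.EqOn g (Function.const ℂ (g z₀)) (ball (0:ℂ) 1) :=
      Complex.eqOn_of_isPreconnected_of_isMaxOn_norm (convex_ball _ _).isPreconnected
        isOpen_ball hgd hz₀ hmax
    have hpconst : ∀ u ∈ ball (0:ℂ) 1, p u = 0 := by
      have hd0 : ∀ u ∈ ball (0:ℂ) 1, fderivWithin ℂ p (ball (0:ℂ) 1) u = 0 := by
        intro u hu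
        have hpu : DifferentiableAt ℂ p u := hp.differentiableAt (isOpen_ball.mem_nhds hu)
        have hgu : HasDerivAt g (Complex.exp (-p u) * -(deriv p u)) u :=
          (hpu.hasDerivAt.neg).cexp
        have hgc : HasDerivAt g 0 u := by
          have hev : g =ᶠ[𝓝 u] fun _ => g z₀ :=
            Filter.eventuallyEq_of_mem (isOpen_ball.mem_nhds hu) heq
          exact (hasDerivAt_const u (g z₀)).congr_of_eventuallyEq hev
        have hder0 : Complex.exp (-p u) * -(deriv p u) = 0 := hgu.unique hgc
        have : deriv p u = 0 := by
          rcases mul_eq_zero.1 hder0 with h | h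
          · exact absurd h (Complex.exp_ne_zero _)
          · simpa using h
        have hF : HasFDerivAt p (0 : ℂ →L[ℂ] ℂ) u := by
          have h2 : HasDerivAt p 0 u := this ▸ hpu.hasDerivAt
          have h3 := h2.hasFDerivAt
          have h4 : ContinuousLinearMap.toSpanSingleton ℂ (0:ℂ) = 0 := by
            ext x; simp
          rwa [h4] at h3
        rw [fderivWithin_of_isOpen isOpen_ball hu]
        exact hF.fderiv
      intro u hu
      have := (convex_ball (0:ℂ) 1).is_const_of_fderivWithin_eq_zero hp hd0 hu hz₀
      rw [this, hpz₀]
    have hf0 : ∀ᶠ r in 𝓝[<] (1:ℝ), f (γ r) / (γ r - ζ) = 0 := by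
      filter_upwards [hIoo] with r hr
      rw [hf, hpconst _ (hγball r hr)]
      simp
    have : Tendsto (fun _ : ℝ => (0:ℂ)) (𝓝[<] (1:ℝ)) (𝓝 (m:ℂ)) :=
      Filter.Tendsto.congr' hf0 hrad
    exact hm0 (tendsto_nhds_unique this tendsto_const_nhds)
end
end

section
/- Let f be a holomorphic generator on 𝔻 with Denjoy–Wolff point a = 0, i.e. f(z) = z·p(z) with p holomorphic and Re p ≥ 0 on 𝔻, and let ζ_1, …, ζ_N be pairwise distinct boundary regular null points of f with f'(ζ_n) = ∠lim_{z→ζ_n} f(z)/(z − ζ_n) < 0 real. Then for any points η_1, …, η_N ∈ ∂𝔻 with η_n ≠ ζ_n for all n, there exist a real number r ≥ 0 and a holomorphic generator h on 𝔻 with Denjoy–Wolff point 0 (i.e. h(z) = z·q(z), q holomorphic, Re q ≥ 0 on 𝔻) satisfying ∠lim_{z→ζ_n} |h(z)/(z − ζ_n)| = ∞ for every n, such that 1/f(z) = Σ_{n=1}^{N} (1/|f'(ζ_n)|)·( (conj(ζ_n)·η_n/(conj(ζ_n)·η_n − 1))·(1/z) − 1/(z − ζ_n) ) + r/h(z) for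 all z ∈ 𝔻 with f(z) ≠ 0 and h(z) ≠ 0. -/
open Complex Filter Metric Finset

noncomputable section

lemma nsq_mob' (u w : ℂ) :
    normSq (1 + (starRingEnd ℂ) w * u) - normSq (u + w) = (1 - normSq u) * (1 - normSq w) := by
  simp only [Complex.normSq_apply, Complex.add_re, Complex.add_im, Complex.mul_re,
    Complex.mul_im, Complex.conj_re, Complex.conj_im, Complex.one_re, Complex.one_im]
  ring

lemma nsq_half' (x a : ℂ) :
    normSq (x + (starRingEnd ℂ) a) - normSq (x - a) = 4 * x.re * a.re := by
  simp only [Complex.normSq_apply, Complex.add_re, Complex.add_im, Complex.sub_re,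
    Complex.sub_im, Complex.conj_re, Complex.conj_im]
  ring

lemma mem_ball01 {z : ℂ} : z ∈ ball (0:ℂ) 1 ↔ ‖z‖ < 1 := by
  simp [Complex.dist_eq]

lemma nsq_lt_one {z : ℂ} (hz : z ∈ ball (0:ℂ) 1) : normSq z < 1 := by
  rw [Complex.normSq_eq_norm_sq]
  have := mem_ball01.1 hz
  nlinarith [norm_nonneg z]

lemma mob_den_ne_s7 {u w : ℂ} (hu : u ∈ ball (0:ℂ) 1) (hw : w ∈ ball (0:ℂ) 1) :
    1 + (starRingEnd ℂ) w * u ≠ 0 := by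
  intro h
  have : ‖(starRingEnd ℂ) w * u‖ = 1 := by
    have : (starRingEnd ℂ) w * u = -1 := by linear_combination h
    rw [this]; simp
  rw [norm_mul, Complex.norm_conj] at this
  have h1 := mem_ball01.1 hu; have h2 := mem_ball01.1 hw
  nlinarith [norm_nonneg u, norm_nonneg w]

lemma mob_mem_ball {u w : ℂ} (hu : u ∈ ball (0:ℂ) 1) (hw : w ∈ ball (0:ℂ) 1) :
    (u + w) / (1 + (starRingEnd ℂ) w * u) ∈ ball (0:ℂ) 1 := by
  rw [mem_ball01, norm_div, div_lt_one (norm_pos_iff.mpr (mob_den_ne_s7 hu hw))]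
  have key := nsq_mob' u w
  have h1 := nsq_lt_one hu; have h2 := nsq_lt_one hw
  have h3 : normSq (u + w) < normSq (1 + (starRingEnd ℂ) w * u) := by nlinarith
  rw [Complex.normSq_eq_norm_sq, Complex.normSq_eq_norm_sq] at h3
  nlinarith [norm_nonneg (u + w), norm_nonneg (1 + (starRingEnd ℂ) w * u)]

lemma halfplane_lt {x a : ℂ} (hx : 0 < x.re) (ha : 0 < a.re) :
    ‖x - a‖ < ‖x + (starRingEnd ℂ) a‖ := by
  have key := nsq_half' x a
  have h3 : normSq (x - a) < normSq (x + (starRingEnd ℂ) a) := by nlinarith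
  rw [Complex.normSq_eq_norm_sq, Complex.normSq_eq_norm_sq] at h3
  nlinarith [norm_nonneg (x - a), norm_nonneg (x + (starRingEnd ℂ) a)]

/-- Schwarz–Pick inequality for maps of the disk into the right half-plane. -/
lemma schwarzPick {P : ℂ → ℂ} (hd : DifferentiableOn ℂ P (ball (0:ℂ) 1))
    (hpos : ∀ z ∈ ball (0:ℂ) 1, 0 < (P z).re) {z w : ℂ}
    (hz : z ∈ ball (0:ℂ) 1) (hw : w ∈ ball (0:ℂ) 1) :
    ‖P z - P w‖ * ‖1 - (starRingEnd ℂ) w * z‖ ≤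
      ‖z - w‖ * ‖P z + (starRingEnd ℂ) (P w)‖ := by
  set μ : ℂ → ℂ := fun u => (u + w) / (1 + (starRingEnd ℂ) w * u) with hμ
  set a : ℂ := P w with hA
  set g : ℂ → ℂ := fun u => (P (μ u) - a) / (P (μ u) + (starRingEnd ℂ) a) with hg
  have hμmem : ∀ u ∈ ball (0:ℂ) 1, μ u ∈ ball (0:ℂ) 1 := fun u hu => mob_mem_ball hu hw
  have hare : 0 < a.re := hpos w hw
  have hden2 : ∀ u ∈ ball (0:ℂ) 1, P (μ u) + (starRingEnd ℂ) a ≠ 0 := by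
    intro u hu h
    have h1 : 0 < (P (μ u)).re := hpos _ (hμmem u hu)
    have : (P (μ u) + (starRingEnd ℂ) a).re = (P (μ u)).re + a.re := by
      simp [Complex.add_re, Complex.conj_re]
    rw [h] at this; simp at this; linarith
  have hμdiff : DifferentiableOn ℂ μ (ball (0:ℂ) 1) := by
    apply DifferentiableOn.div
    · exact (differentiableOn_id).add (differentiableOn_const w)
    · exact (differentiableOn_const _).add ((differentiableOn_const _).mul differentiableOn_id)
    · exact fun u hu => mob_den_ne_s7 hu hw
  have hPμ : DifferentiableOn ℂ (fun u => P (μ u)) (ball (0:ℂ) 1) :=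
    hd.comp hμdiff fun u hu => hμmem u hu
  have hgdiff : DifferentiableOn ℂ g (ball (0:ℂ) 1) :=
    (hPμ.sub (differentiableOn_const a)).div
      (hPμ.add (differentiableOn_const _)) hden2
  have hgmaps : Set.MapsTo g (ball (0:ℂ) 1) (ball (0:ℂ) 1) := by
    intro u hu
    rw [mem_ball01, hg]
    simp only [norm_div]
    rw [div_lt_one (norm_pos_iff.mpr (hden2 u hu))]
    exact halfplane_lt (hpos _ (hμmem u hu)) hare
  have hg0 : g 0 = 0 := by
    have hμ0 : μ 0 = w := by rw [hμ]; simp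
    rw [hg]; simp only [hμ0]; rw [← hA]; simp
  have hwneg : -w ∈ ball (0:ℂ) 1 := by rw [mem_ball01] at hw ⊢; simpa using hw
  have h1ne : (1:ℂ) - (starRingEnd ℂ) w * z ≠ 0 := by
    have := mob_den_ne_s7 hz hwneg
    simpa [map_neg, sub_eq_add_neg, neg_mul] using this
  have hsub : ‖z - w‖ < ‖1 - (starRingEnd ℂ) w * z‖ := by
    have key := nsq_mob' z (-w)
    rw [Complex.normSq_neg] at key
    have e1 : (1:ℂ) + (starRingEnd ℂ) (-w) * z = 1 - (starRingEnd ℂ) w * z := by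
      rw [map_neg]; ring
    have e2 : z + -w = z - w := by ring
    rw [e1, e2] at key
    have h1 := nsq_lt_one hz; have h2 := nsq_lt_one hw
    have h3 : normSq (z - w) < normSq (1 - (starRingEnd ℂ) w * z) := by nlinarith
    rw [Complex.normSq_eq_norm_sq, Complex.normSq_eq_norm_sq] at h3
    nlinarith [norm_nonneg (z - w), norm_nonneg (1 - (starRingEnd ℂ) w * z)]
  set u₀ : ℂ := (z - w) / (1 - (starRingEnd ℂ) w * z) with hu₀def
  have hu₀ : u₀ ∈ ball (0:ℂ) 1 := by
    rw [mem_ball01, hu₀def, norm_div, div_lt_one (norm_pos_iff.mpr h1ne)]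
    exact hsub
  have hμu₀ : μ u₀ = z := by
    rw [hμ]
    simp only [hu₀def]
    rw [div_add' _ _ _ h1ne, div_eq_iff]
    · rw [mul_div_assoc', add_div' _ _ _ h1ne, mul_div_assoc', div_left_inj' h1ne]
      ring
    · intro h
      apply mob_den_ne_s7 hu₀ hw
      rw [hu₀def]
      convert h using 2
  have hSch := Complex.dist_le_div_mul_dist_of_mapsTo_ball (R₂ := 1) hgdiff
    (by rw [hg0]; exact hgmaps.mono_right ball_subset_closedBall) hu₀
  rw [hg0, dist_zero_right, dist_zero_right, div_self one_ne_zero, one_mul] at hSch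
  have hgu₀ : g u₀ = (P z - a) / (P z + (starRingEnd ℂ) a) := by rw [hg]; simp only [hμu₀]
  rw [hgu₀] at hSch
  have hPden : P z + (starRingEnd ℂ) a ≠ 0 := by
    have := hden2 u₀ hu₀
    rwa [hμu₀] at this
  rw [hu₀def, norm_div, norm_div] at hSch
  rw [div_le_div_iff₀ (norm_pos_iff.mpr hPden) (norm_pos_iff.mpr h1ne)] at hSch
  rw [hA] at hSch
  linarith [hSch]

/-- If `Re p ≥ 0` on the unit ball and `Re p z₀ = 0`, then `p` is constant. -/
lemma constOfReZero {p : ℂ → ℂ} (hp : DifferentiableOn ℂ p (ball (0:ℂ) 1))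
    (hre : ∀ z ∈ ball (0:ℂ) 1, 0 ≤ (p z).re) {z₀ : ℂ} (h₀ : z₀ ∈ ball (0:ℂ) 1)
    (hz₀ : (p z₀).re = 0) : ∀ z ∈ ball (0:ℂ) 1, p z = p z₀ := by
  have key : ∀ t : ℝ, 0 < t → ∀ z ∈ ball (0:ℂ) 1,
      Complex.exp ((t:ℂ) * (p z₀ - p z)) = 1 := by
    intro t ht
    set g : ℂ → ℂ := fun z => Complex.exp ((t:ℂ) * (p z₀ - p z)) with hg
    have gdiff : DifferentiableOn ℂ g (ball (0:ℂ) 1) :=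
      (((differentiableOn_const (p z₀)).sub hp).const_mul _).cexp
    have gnorm : ∀ z ∈ ball (0:ℂ) 1, ‖g z‖ ≤ 1 := by
      intro z hz
      have : ((t:ℂ) * (p z₀ - p z)).re = t * ((p z₀).re - (p z).re) := by
        rw [Complex.re_ofReal_mul, Complex.sub_re]
      rw [hg]
      simp only [Complex.norm_exp, this, hz₀]
      have : t * (0 - (p z).re) ≤ 0 := by
        have := hre z hz; nlinarith
      calc Real.exp (t * (0 - (p z).re)) ≤ Real.exp 0 := Real.exp_le_exp.2 this
        _ = 1 := Real.exp_zero
    have g0 : g z₀ = 1 := by simp [hg]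
    have gmax : IsMaxOn (norm ∘ g) (ball (0:ℂ) 1) z₀ := by
      intro z hz
      simp only [Function.comp_apply, Set.mem_setOf_eq, g0, norm_one]
      exact gnorm z hz
    have := Complex.eqOn_of_isPreconnected_of_isMaxOn_norm
      (convex_ball (0:ℂ) 1).isPreconnected isOpen_ball gdiff h₀ gmax
    intro z hz
    have hzz := this hz
    simpa [Function.const, g0] using hzz
  intro z hz
  by_contra hne
  set c : ℂ := p z₀ - p z with hc
  have hcne : c ≠ 0 := sub_ne_zero.2 fun h => hne h.symm
  have habs : 0 < ‖c‖ := norm_pos_iff.mpr hcne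
  have ht : (0:ℝ) < Real.pi / ‖c‖ := div_pos Real.pi_pos habs
  have h1 := key (Real.pi / ‖c‖) ht z hz
  rw [Complex.exp_eq_one_iff] at h1
  obtain ⟨n, hn⟩ := h1
  have habs2 : ‖((Real.pi / ‖c‖ : ℝ):ℂ) * c‖ = Real.pi := by
    rw [norm_mul, Complex.norm_real, Real.norm_eq_abs, abs_of_pos ht, div_mul_cancel₀]
    exact habs.ne'
  rw [hn] at habs2
  have hval : ‖(n:ℂ) * (2 * (Real.pi:ℂ) * Complex.I)‖ = |(n:ℝ)| * (2 * Real.pi) := by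
    rw [norm_mul, norm_mul, norm_mul, Complex.norm_intCast, Complex.norm_two,
      Complex.norm_real, Real.norm_eq_abs, Complex.norm_I, abs_of_pos Real.pi_pos]
    ring
  have heq : |(n:ℝ)| * (2 * Real.pi) = Real.pi := by rw [← hval]; exact habs2
  rcases eq_or_ne n 0 with h0 | h0
  · rw [h0] at heq
    simp at heq
    exact Real.pi_ne_zero heq.symm
  · have : (1:ℝ) ≤ |(n:ℝ)| := by
      have : (1:ℤ) ≤ |n| := Int.one_le_abs h0
      calc (1:ℝ) ≤ ((|n|:ℤ):ℝ) := by exact_mod_cast this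
        _ = |(n:ℝ)| := by push_cast; rfl
    nlinarith [Real.pi_pos]

lemma nsq_ne_zero {x : ℂ} (h : x ≠ 0) : normSq x ≠ 0 := by
  simpa [Complex.normSq_eq_zero] using h

lemma ne_boundary {z ζ : ℂ} (hz : z ∈ ball (0:ℂ) 1) (hζ : ‖ζ‖ = 1) : z ≠ ζ := by
  intro h; rw [h, mem_ball01, hζ] at hz; exact lt_irrefl 1 hz



lemma nsq_sub_id (z w : ℂ) :
    normSq (z - w) = normSq (1 - (starRingEnd ℂ) w * z) - (1 - normSq z) * (1 - normSq w) := by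
  simp only [Complex.normSq_apply, Complex.add_re, Complex.add_im, Complex.sub_re,
    Complex.sub_im, Complex.mul_re, Complex.mul_im, Complex.conj_re, Complex.conj_im,
    Complex.one_re, Complex.one_im]
  ring

lemma one_sub_conj_ne {z w : ℂ} (hz : z ∈ ball (0:ℂ) 1) (hw : w ∈ ball (0:ℂ) 1) :
    (1:ℂ) - (starRingEnd ℂ) w * z ≠ 0 := by
  have hwneg : -w ∈ ball (0:ℂ) 1 := by rw [mem_ball01] at hw ⊢; simpa using hw
  have := mob_den_ne_s7 hz hwneg
  simpa [map_neg, sub_eq_add_neg, neg_mul] using this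

lemma conj_mul_self_eq_one {ζ : ℂ} (hζ : ‖ζ‖ = 1) : (starRingEnd ℂ) ζ * ζ = 1 := by
  rw [mul_comm, Complex.mul_conj]
  rw [Complex.normSq_eq_norm_sq, hζ]
  norm_num

lemma one_sub_conj_boundary {ζ z : ℂ} (hζ : ‖ζ‖ = 1) :
    (1:ℂ) - (starRingEnd ℂ) ζ * z = (starRingEnd ℂ) ζ * (ζ - z) := by
  rw [mul_sub, conj_mul_self_eq_one hζ]

lemma nsq_one_sub_conj {ζ z : ℂ} (hζ : ‖ζ‖ = 1) :
    normSq (1 - (starRingEnd ℂ) ζ * z) = normSq (ζ - z) := by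
  rw [one_sub_conj_boundary hζ, Complex.normSq_mul, Complex.normSq_conj,
    Complex.normSq_eq_norm_sq, hζ]
  norm_num

lemma tendsto_ofReal_one : Tendsto (fun ρ : ℝ => (ρ:ℂ)) (nhdsWithin 1 (Set.Iio 1)) (nhds 1) :=
  (Complex.continuous_ofReal.tendsto 1).mono_left nhdsWithin_le_nhds

lemma tendsto_one_sub_ofReal :
    Tendsto (fun ρ : ℝ => 1 - (ρ:ℂ)) (nhdsWithin 1 (Set.Iio 1)) (nhds 0) := by
  have := (tendsto_const_nhds : Tendsto (fun _ : ℝ => (1:ℂ)) (nhdsWithin 1 (Set.Iio 1)) (nhds 1)).sub tendsto_ofReal_one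
  simpa using this

/-- Julia-type lemma: lower bound for `Re P` from a radial residue. -/
lemma lemB {P : ℂ → ℂ} (hd : DifferentiableOn ℂ P (ball (0:ℂ) 1))
    (h0 : ∀ z ∈ ball (0:ℂ) 1, 0 ≤ (P z).re) {ζ : ℂ} (hζ : ‖ζ‖ = 1)
    {σ : ℝ} (hσ : 0 < σ)
    (hres : Tendsto (fun ρ : ℝ => (1 - (ρ:ℂ)) * P ((ρ:ℂ) * ζ)) (nhdsWithin 1 (Set.Iio 1))
      (nhds (σ:ℂ))) :
    ∀ z ∈ ball (0:ℂ) 1, σ / 2 * ((1 - normSq z) / normSq (ζ - z)) ≤ (P z).re := by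
  have hradmem : ∀ ρ : ℝ, ρ ∈ Set.Ioo (0:ℝ) 1 → (ρ:ℂ) * ζ ∈ ball (0:ℂ) 1 := by
    intro ρ hρ
    rw [mem_ball01, norm_mul, hζ, mul_one, Complex.norm_real, Real.norm_eq_abs, abs_of_pos hρ.1]
    exact hρ.2
  have hIoo : Set.Ioo (0:ℝ) 1 ∈ nhdsWithin (1:ℝ) (Set.Iio 1) :=
    Ioo_mem_nhdsLT_of_mem (by constructor <;> norm_num)
  -- strict positivity of Re P
  have hpos : ∀ z ∈ ball (0:ℂ) 1, 0 < (P z).re := by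
    intro z hz
    rcases lt_or_eq_of_le (h0 z hz) with h | h
    · exact h
    · exfalso
      have hconst := constOfReZero hd h0 hz h.symm
      have : Tendsto (fun ρ : ℝ => (1 - (ρ:ℂ)) * P ((ρ:ℂ) * ζ)) (nhdsWithin 1 (Set.Iio 1))
          (nhds 0) := by
        have : Tendsto (fun ρ : ℝ => (1 - (ρ:ℂ)) * P z) (nhdsWithin 1 (Set.Iio 1))
            (nhds 0) := by
          simpa using tendsto_one_sub_ofReal.mul (tendsto_const_nhds : Tendsto _ _ (nhds (P z)))
        refine this.congr' ?_
        filter_upwards [hIoo] with ρ hρ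
        rw [hconst _ (hradmem ρ hρ)]
      have := tendsto_nhds_unique hres this
      rw [Complex.ofReal_eq_zero] at this
      linarith
  intro z hz
  have hzζ : ζ - z ≠ 0 := sub_ne_zero.2 (ne_boundary hz hζ).symm
  have hnsqζz : 0 < normSq (ζ - z) := Complex.normSq_pos.2 hzζ
  have hσC : ((σ:ℂ)) ≠ 0 := by exact_mod_cast hσ.ne'
  set Φ : ℝ → ℝ := fun ρ =>
    (1 - normSq z) * (1 + ρ) *
      normSq ((1 - (ρ:ℂ)) * (P z + (starRingEnd ℂ) (P ((ρ:ℂ) * ζ)))) /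
    (4 * ((1 - (ρ:ℂ)) * P ((ρ:ℂ) * ζ)).re * normSq (1 - (starRingEnd ℂ) ((ρ:ℂ) * ζ) * z))
    with hΦ
  have claim1 : ∀ᶠ ρ in nhdsWithin (1:ℝ) (Set.Iio 1), Φ ρ ≤ (P z).re := by
    filter_upwards [hIoo] with ρ hρ
    set w : ℂ := (ρ:ℂ) * ζ with hwdef
    have hwball : w ∈ ball (0:ℂ) 1 := hradmem ρ hρ
    have hb : 0 < (P w).re := hpos w hwball
    have ha : 0 < (P z).re := hpos z hz
    have hSP := schwarzPick hd hpos hz hwball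
    have habs1 : (0:ℝ) ≤ ‖P z - P w‖ * ‖1 - (starRingEnd ℂ) w * z‖ := by
      positivity
    have key1 : normSq (P z - P w) * normSq (1 - (starRingEnd ℂ) w * z) ≤
        normSq (z - w) * normSq (P z + (starRingEnd ℂ) (P w)) := by
      have := mul_self_le_mul_self habs1 hSP
      rw [Complex.normSq_eq_norm_sq, Complex.normSq_eq_norm_sq, Complex.normSq_eq_norm_sq,
        Complex.normSq_eq_norm_sq]
      nlinarith [this]
    have id1 := nsq_sub_id z w
    have id2 := nsq_half' (P z) (P w)
    have key2 : (1 - normSq z) * (1 - normSq w) * normSq (P z + (starRingEnd ℂ) (P w)) ≤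
        4 * (P z).re * (P w).re * normSq (1 - (starRingEnd ℂ) w * z) := by
      have h2' : normSq (P z - P w) =
          normSq (P z + (starRingEnd ℂ) (P w)) - 4 * (P z).re * (P w).re := by linarith
      rw [id1, h2'] at key1
      ring_nf at key1 ⊢
      linarith [key1]
    have hCpos : 0 < normSq (1 - (starRingEnd ℂ) w * z) :=
      Complex.normSq_pos.2 (one_sub_conj_ne hz hwball)
    have hρpos : 0 < 1 - ρ := by linarith [hρ.2]
    have hrepos : 0 < ((1 - (ρ:ℂ)) * P w).re := by
      have : (1 - (ρ:ℂ)) = (((1 - ρ : ℝ)):ℂ) := by push_cast; ring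
      rw [this, Complex.re_ofReal_mul]
      positivity
    rw [hΦ]
    rw [div_le_iff₀ (by positivity)]
    have hnum : normSq ((1 - (ρ:ℂ)) * (P z + (starRingEnd ℂ) (P w))) =
        (1 - ρ)^2 * normSq (P z + (starRingEnd ℂ) (P w)) := by
      rw [Complex.normSq_mul]
      have : (1 - (ρ:ℂ)) = (((1 - ρ : ℝ)):ℂ) := by push_cast; ring
      rw [this, Complex.normSq_ofReal]
      ring
    have hre' : ((1 - (ρ:ℂ)) * P w).re = (1 - ρ) * (P w).re := by
      have : (1 - (ρ:ℂ)) = (((1 - ρ : ℝ)):ℂ) := by push_cast; ring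
      rw [this, Complex.re_ofReal_mul]
    have hwnsq : normSq w = ρ^2 := by
      rw [hwdef, Complex.normSq_mul, Complex.normSq_ofReal, Complex.normSq_eq_norm_sq, hζ]
      ring
    rw [hnum, hre']
    have expand : (1 - normSq z) * (1 + ρ) *
        ((1 - ρ)^2 * normSq (P z + (starRingEnd ℂ) (P w))) =
        (1 - ρ) * ((1 - normSq z) * (1 - normSq w) * normSq (P z + (starRingEnd ℂ) (P w))) := by
      rw [hwnsq]; ring
    rw [expand]
    calc (1 - ρ) * ((1 - normSq z) * (1 - normSq w) * normSq (P z + (starRingEnd ℂ) (P w)))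
        ≤ (1 - ρ) * (4 * (P z).re * (P w).re * normSq (1 - (starRingEnd ℂ) w * z)) :=
          mul_le_mul_of_nonneg_left key2 hρpos.le
      _ = (P z).re * (4 * ((1 - ρ) * (P w).re) * normSq (1 - (starRingEnd ℂ) w * z)) := by ring
  -- limit of Φ
  have tρζ : Tendsto (fun ρ : ℝ => (ρ:ℂ) * ζ) (nhdsWithin 1 (Set.Iio 1)) (nhds ζ) := by
    have := tendsto_ofReal_one.mul (tendsto_const_nhds : Tendsto (fun _ : ℝ => ζ) _ (nhds ζ))
    simpa using this
  have hre1 : Tendsto (fun ρ : ℝ => ((1 - (ρ:ℂ)) * P ((ρ:ℂ) * ζ)).re)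
      (nhdsWithin 1 (Set.Iio 1)) (nhds σ) := by
    have := (Complex.continuous_re.tendsto ((σ:ℂ))).comp hres
    rw [Complex.ofReal_re] at this
    exact this
  have hX : Tendsto (fun ρ : ℝ => (1 - (ρ:ℂ)) * (P z + (starRingEnd ℂ) (P ((ρ:ℂ) * ζ))))
      (nhdsWithin 1 (Set.Iio 1)) (nhds ((σ:ℂ))) := by
    have heq : ∀ ρ : ℝ, (1 - (ρ:ℂ)) * (P z + (starRingEnd ℂ) (P ((ρ:ℂ) * ζ))) =
        (1 - (ρ:ℂ)) * P z + (starRingEnd ℂ) ((1 - (ρ:ℂ)) * P ((ρ:ℂ) * ζ)) := by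
      intro ρ
      rw [map_mul, map_sub, map_one, Complex.conj_ofReal]
      ring
    have h1 : Tendsto (fun ρ : ℝ => (1 - (ρ:ℂ)) * P z) (nhdsWithin 1 (Set.Iio 1)) (nhds 0) := by
      simpa using tendsto_one_sub_ofReal.mul
        (tendsto_const_nhds : Tendsto (fun _ : ℝ => P z) _ (nhds (P z)))
    have h2 : Tendsto (fun ρ : ℝ => (starRingEnd ℂ) ((1 - (ρ:ℂ)) * P ((ρ:ℂ) * ζ)))
        (nhdsWithin 1 (Set.Iio 1)) (nhds ((σ:ℂ))) := by
      have := (Complex.continuous_conj.tendsto ((σ:ℂ))).comp hres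
      rw [Complex.conj_ofReal] at this
      exact this
    have := h1.add h2
    rw [zero_add] at this
    exact this.congr fun ρ => (heq ρ).symm
  have hnum2 : Tendsto (fun ρ : ℝ =>
      (1 - normSq z) * (1 + ρ) *
        normSq ((1 - (ρ:ℂ)) * (P z + (starRingEnd ℂ) (P ((ρ:ℂ) * ζ)))))
      (nhdsWithin 1 (Set.Iio 1)) (nhds ((1 - normSq z) * 2 * (σ * σ))) := by
    have t1 : Tendsto (fun ρ : ℝ => (1:ℝ) + ρ) (nhdsWithin 1 (Set.Iio 1)) (nhds 2) := by
      have : Tendsto (fun ρ : ℝ => (1:ℝ) + ρ) (nhds 1) (nhds (1 + 1)) :=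
        ((continuous_const (y := (1:ℝ))).add continuous_id).tendsto (1:ℝ)
      norm_num at this
      exact this.mono_left nhdsWithin_le_nhds
    have t2 : Tendsto (fun ρ : ℝ =>
        normSq ((1 - (ρ:ℂ)) * (P z + (starRingEnd ℂ) (P ((ρ:ℂ) * ζ)))))
        (nhdsWithin 1 (Set.Iio 1)) (nhds (σ * σ)) := by
      have := (Complex.continuous_normSq.tendsto ((σ:ℂ))).comp hX
      rw [Complex.normSq_ofReal] at this
      exact this
    exact ((tendsto_const_nhds (x := (1 - normSq z))).mul t1).mul t2
  have hden2 : Tendsto (fun ρ : ℝ =>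
      4 * ((1 - (ρ:ℂ)) * P ((ρ:ℂ) * ζ)).re * normSq (1 - (starRingEnd ℂ) ((ρ:ℂ) * ζ) * z))
      (nhdsWithin 1 (Set.Iio 1)) (nhds (4 * σ * normSq (ζ - z))) := by
    have t3 : Tendsto (fun ρ : ℝ => normSq (1 - (starRingEnd ℂ) ((ρ:ℂ) * ζ) * z))
        (nhdsWithin 1 (Set.Iio 1)) (nhds (normSq (ζ - z))) := by
      have tc : Tendsto (fun ρ : ℝ => (1:ℂ) - (starRingEnd ℂ) ((ρ:ℂ) * ζ) * z)
          (nhdsWithin 1 (Set.Iio 1)) (nhds (1 - (starRingEnd ℂ) ζ * z)) := by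
        have := ((Complex.continuous_conj.tendsto ζ).comp tρζ).mul
          (tendsto_const_nhds : Tendsto (fun _ : ℝ => z) _ (nhds z))
        exact tendsto_const_nhds.sub this
      have := (Complex.continuous_normSq.tendsto _).comp tc
      rw [nsq_one_sub_conj hζ] at this
      exact this
    exact ((tendsto_const_nhds (x := (4:ℝ))).mul hre1).mul t3
  have hdenne : 4 * σ * normSq (ζ - z) ≠ 0 := by positivity
  have claim2 : Tendsto Φ (nhdsWithin (1:ℝ) (Set.Iio 1))
      (nhds ((1 - normSq z) * 2 * (σ * σ) / (4 * σ * normSq (ζ - z)))) := hnum2.div hden2 hdenne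
  have hval : (1 - normSq z) * 2 * (σ * σ) / (4 * σ * normSq (ζ - z)) =
      σ / 2 * ((1 - normSq z) / normSq (ζ - z)) := by
    field_simp
    ring
  rw [hval] at claim2
  exact le_of_tendsto claim2 claim1


lemma tendsto_radial_stolz {ζ : ℂ} (hζ : ‖ζ‖ = 1) {M : ℝ} (hM : 1 < M) :
    Tendsto (fun ρ : ℝ => (ρ:ℂ) * ζ) (nhdsWithin 1 (Set.Iio 1))
      (nhdsWithin ζ (StolzAngle ζ M)) := by
  rw [tendsto_nhdsWithin_iff]
  constructor
  · have := tendsto_ofReal_one.mul (tendsto_const_nhds : Tendsto (fun _ : ℝ => ζ) _ (nhds ζ))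
    simpa using this
  · filter_upwards [Ioo_mem_nhdsLT_of_mem (by constructor <;> norm_num : (1:ℝ) ∈ Set.Ioc 0 1)]
      with ρ hρ
    constructor
    · rw [norm_mul, hζ, mul_one, Complex.norm_real, Real.norm_eq_abs, abs_of_pos hρ.1]; exact hρ.2
    · have h1 : ζ - (ρ:ℂ) * ζ = ((1 - ρ : ℝ):ℂ) * ζ := by push_cast; ring
      rw [h1, norm_mul, norm_mul, hζ, mul_one, mul_one, Complex.norm_real, Complex.norm_real,
        Real.norm_eq_abs, Real.norm_eq_abs, abs_of_pos hρ.1, abs_of_pos (by linarith [hρ.2] : (0:ℝ) < 1 - ρ)]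
      nlinarith [hρ.2]

lemma stolz_subset_ball {ζ : ℂ} {M : ℝ} : StolzAngle ζ M ⊆ ball (0:ℂ) 1 := by
  intro z hz; rw [mem_ball01]; exact hz.1

lemma tendsto_abs_div_atTop {α : Type*} {l : Filter α} {a b : α → ℝ} {A : ℝ} (hA : 0 < A)
    (ha : Tendsto a l (nhds A)) (hb : Tendsto b l (nhds 0)) (hb' : ∀ᶠ z in l, 0 < b z) :
    Tendsto (fun z => a z * (b z)⁻¹) l atTop := by
  have h1 : Tendsto b l (nhdsWithin 0 (Set.Ioi 0)) := by
    rw [tendsto_nhdsWithin_iff]; exact ⟨hb, hb'⟩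
  exact ha.pos_mul_atTop hA (tendsto_inv_nhdsGT_zero.comp h1)

lemma re_K {ζ z : ℂ} (hζ : ‖ζ‖ = 1) (hne : ζ - z ≠ 0) :
    ((ζ + z) / (ζ - z)).re = (1 - normSq z) / normSq (ζ - z) := by
  have hnsq : ζ.re * ζ.re + ζ.im * ζ.im = 1 := by
    have : normSq ζ = 1 := by rw [Complex.normSq_eq_norm_sq, hζ]; norm_num
    simpa [Complex.normSq_apply] using this
  rw [Complex.div_re, ← add_div]
  congr 1
  · simp only [Complex.add_re, Complex.add_im, Complex.sub_re, Complex.sub_im,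
      Complex.normSq_apply]
    linear_combination hnsq
  
lemma re_quot {ζ z : ℂ} (hζ : ‖ζ‖ = 1) (hne : z - ζ ≠ 0) :
    (z / (z - ζ)).re = 1/2 - (1 - normSq z) / (2 * normSq (ζ - z)) := by
  have hnsq : ζ.re * ζ.re + ζ.im * ζ.im = 1 := by
    have : normSq ζ = 1 := by rw [Complex.normSq_eq_norm_sq, hζ]; norm_num
    simpa [Complex.normSq_apply] using this
  have hD : normSq (z - ζ) ≠ 0 := nsq_ne_zero hne
  have hD2 : normSq (ζ - z) = normSq (z - ζ) := by
    rw [show ζ - z = -(z - ζ) by ring, Complex.normSq_neg]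
  rw [Complex.div_re, ← add_div, hD2]
  rw [div_eq_iff hD]
  have hDexp : normSq (z - ζ) = (z.re - ζ.re)*(z.re - ζ.re) + (z.im - ζ.im)*(z.im - ζ.im) := by
    simp [Complex.normSq_apply]
  field_simp
  simp only [Complex.sub_re, Complex.sub_im, Complex.normSq_apply]
  ring_nf
  nlinarith [hnsq]

lemma re_c {w : ℂ} (hw : ‖w‖ = 1) (hne : w ≠ 1) : (w / (w - 1)).re = 1/2 := by
  have hnsq : w.re * w.re + w.im * w.im = 1 := by
    have : normSq w = 1 := by rw [Complex.normSq_eq_norm_sq, hw]; norm_num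
    simpa [Complex.normSq_apply] using this
  have hre1 : w.re ≠ 1 := by
    intro h
    apply hne
    have him : w.im = 0 := by nlinarith
    exact Complex.ext (by simp [h]) (by simp [him])
  have hD : normSq (w - 1) ≠ 0 := nsq_ne_zero (sub_ne_zero.2 hne)
  rw [Complex.div_re, ← add_div, div_eq_iff hD]
  simp only [Complex.sub_re, Complex.sub_im, Complex.one_re, Complex.one_im,
    Complex.normSq_apply]
  ring_nf
  nlinarith [hnsq]


/-- Corollary `c.dilation`: separation of boundary singularities
for a generator of dilation type (Denjoy–Wolff point 0). -/
theorem stmt7 (N : ℕ) (p f : ℂ → ℂ)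
    (hp : DifferentiableOn ℂ p (ball (0:ℂ) 1))
    (hre : ∀ z ∈ ball (0:ℂ) 1, 0 ≤ (p z).re)
    (hf : ∀ z, f z = z * p z)
    (ζ : Fin N → ℂ) (hinj : Function.Injective ζ)
    (hζ : ∀ n, ‖ζ n‖ = 1)
    (m : Fin N → ℝ) (hm : ∀ n, m n < 0)
    (hder : ∀ n, AngularLimit (fun z => f z / (z - ζ n)) (ζ n) ((m n : ℝ) : ℂ))
    (η : Fin N → ℂ) (hη : ∀ n, ‖η n‖ = 1)
    (hηζ : ∀ n, η n ≠ ζ n) :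
    ∃ (r : ℝ) (q h : ℂ → ℂ), 0 ≤ r ∧
      DifferentiableOn ℂ q (ball (0:ℂ) 1) ∧
      (∀ z ∈ ball (0:ℂ) 1, 0 ≤ (q z).re) ∧
      (∀ z, h z = z * q z) ∧
      (∀ n, AngularLimitInfty (fun z => h z / (z - ζ n)) (ζ n)) ∧
      ∀ z ∈ ball (0:ℂ) 1, f z ≠ 0 → h z ≠ 0 →
        1 / f z =
          (∑ n, (1 / ((|m n| : ℝ) : ℂ)) *
            (((starRingEnd ℂ) (ζ n) * η n / ((starRingEnd ℂ) (ζ n) * η n - 1)) * (1 / z)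
              - 1 / (z - ζ n)))
            + (r : ℂ) / h z := by
  rcases Nat.eq_zero_or_pos N with hN | hN
  · subst hN
    refine ⟨1, p, f, zero_le_one, hp, hre, hf, ?_, ?_⟩
    · intro n; exact n.elim0
    · intro z hz hfz hhz
      rw [Finset.univ_eq_empty, Finset.sum_empty, zero_add]
      norm_num
  -- main case
  have hmC : ∀ n, ((m n : ℝ):ℂ) ≠ 0 := fun n => by
    exact_mod_cast (hm n).ne
  have hζne0 : ∀ n, ζ n ≠ 0 := by
    intro n h
    have := hζ n; rw [h] at this; simp at this
  -- p does not vanish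
  have hpne : ∀ z ∈ ball (0:ℂ) 1, p z ≠ 0 := by
    by_contra hcon
    push_neg at hcon
    obtain ⟨z₀, hz₀, hpz₀⟩ := hcon
    have hconst := constOfReZero hp hre hz₀ (by rw [hpz₀]; simp)
    have hpzero : ∀ z ∈ ball (0:ℂ) 1, p z = 0 := by
      intro z hz; rw [hconst z hz, hpz₀]
    set n₀ : Fin N := ⟨0, hN⟩
    have hrad := tendsto_radial_stolz (hζ n₀) one_lt_two
    have hXm := (hder n₀ 2 one_lt_two).comp hrad
    have h0' : Tendsto ((fun z => f z / (z - ζ n₀)) ∘ fun ρ : ℝ => (ρ:ℂ) * ζ n₀)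
        (nhdsWithin 1 (Set.Iio 1)) (nhds 0) := by
      have hev : ∀ᶠ ρ : ℝ in nhdsWithin 1 (Set.Iio 1),
          ((fun z => f z / (z - ζ n₀)) ∘ fun ρ : ℝ => (ρ:ℂ) * ζ n₀) ρ = 0 := by
        filter_upwards [Ioo_mem_nhdsLT_of_mem
          (by constructor <;> norm_num : (1:ℝ) ∈ Set.Ioc 0 1)] with ρ hρ
        have hmem : (ρ:ℂ) * ζ n₀ ∈ ball (0:ℂ) 1 := by
          rw [mem_ball01, norm_mul, hζ n₀, mul_one, Complex.norm_real, Real.norm_eq_abs, abs_of_pos hρ.1]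
          exact hρ.2
        simp only [Function.comp_apply, hf, hpzero _ hmem, mul_zero, zero_div]
      exact tendsto_const_nhds.congr' (by filter_upwards [hev] with ρ h using h.symm)
    have := tendsto_nhds_unique hXm h0'
    exact hmC n₀ this
  set σ : Fin N → ℝ := fun n => 1 / |m n| with hσdef
  have hσpos : ∀ n, 0 < σ n := fun n => by
    have : 0 < |m n| := abs_pos.2 (hm n).ne
    rw [hσdef]; positivity
  have hσm : ∀ n, ((σ n : ℝ):ℂ) = -(((m n : ℝ):ℂ))⁻¹ := by
    intro n
    rw [hσdef]
    simp only
    rw [abs_of_neg (hm n)]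
    push_cast
    rw [div_neg, one_div]
  set c : Fin N → ℂ := fun n => (starRingEnd ℂ) (ζ n) * η n / ((starRingEnd ℂ) (ζ n) * η n - 1)
    with hcdef
  set Q : Fin N → ℂ → ℂ := fun k z => ((σ k : ℝ):ℂ) * (c k - z / (z - ζ k)) with hQdef
  set R : ℂ → ℂ := fun z => (p z)⁻¹ - ∑ k, Q k z with hRdef
  have hzζne : ∀ z ∈ ball (0:ℂ) 1, ∀ k, z - ζ k ≠ 0 :=
    fun z hz k => sub_ne_zero.2 (ne_boundary hz (hζ k))
  have hζzne : ∀ z ∈ ball (0:ℂ) 1, ∀ k, ζ k - z ≠ 0 :=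
    fun z hz k => sub_ne_zero.2 (ne_boundary hz (hζ k)).symm
  have hwabs : ∀ n, ‖(starRingEnd ℂ) (ζ n) * η n‖ = 1 := by
    intro n; rw [norm_mul, Complex.norm_conj, hζ n, hη n, mul_one]
  have hwne1 : ∀ n, (starRingEnd ℂ) (ζ n) * η n ≠ 1 := by
    intro n h
    apply hηζ n
    have := congrArg (fun x => ζ n * x) h
    simp only [mul_one] at this
    rw [← mul_assoc, mul_comm (ζ n), conj_mul_self_eq_one (hζ n), one_mul] at this
    exact this
  have hcre : ∀ n, (c n).re = 1/2 := by
    intro n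
    rw [hcdef]
    exact re_c (hwabs n) (hwne1 n)
  -- real part of Q
  have hQre : ∀ n, ∀ z ∈ ball (0:ℂ) 1, (Q n z).re =
      σ n / 2 * ((1 - normSq z) / normSq (ζ n - z)) := by
    intro n z hz
    rw [hQdef]
    simp only [Complex.re_ofReal_mul, Complex.sub_re]
    rw [hcre n, re_quot (hζ n) (hzζne z hz n)]
    ring
  -- differentiability
  have hPinv_diff : DifferentiableOn ℂ (fun z => (p z)⁻¹) (ball (0:ℂ) 1) := by
    apply DifferentiableOn.inv hp hpne
  have hPinv_re : ∀ z ∈ ball (0:ℂ) 1, 0 ≤ ((p z)⁻¹).re := by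
    intro z hz
    rw [Complex.inv_re]
    exact div_nonneg (hre z hz) (Complex.normSq_nonneg _)
  have hQdiff : ∀ k, DifferentiableOn ℂ (Q k) (ball (0:ℂ) 1) := by
    intro k
    rw [hQdef]
    apply DifferentiableOn.const_mul
    apply DifferentiableOn.sub (differentiableOn_const _)
    exact differentiableOn_id.div (differentiableOn_id.sub (differentiableOn_const _))
      (fun z hz => hzζne z hz k)
  have hRdiff : DifferentiableOn ℂ R (ball (0:ℂ) 1) := by
    rw [hRdef]
    exact hPinv_diff.sub (DifferentiableOn.fun_sum fun k _ => hQdiff k)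
  -- radial residues of (p z)⁻¹
  have hresP : ∀ n, Tendsto (fun ρ : ℝ => (1 - (ρ:ℂ)) * (p ((ρ:ℂ) * ζ n))⁻¹)
      (nhdsWithin 1 (Set.Iio 1)) (nhds ((σ n : ℝ):ℂ)) := by
    intro n
    have hX := (hder n 2 one_lt_two).comp (tendsto_radial_stolz (hζ n) one_lt_two)
    have hneg : Tendsto (fun ρ : ℝ => -(ρ:ℂ)) (nhdsWithin 1 (Set.Iio 1)) (nhds (-1)) :=
      tendsto_ofReal_one.neg
    have htgt := hneg.div hX (hmC n)
    rw [hσm n]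
    have hval : -1 / ((m n : ℝ):ℂ) = -(((m n : ℝ):ℂ))⁻¹ := by field_simp
    rw [← hval]
    refine htgt.congr' ?_
    filter_upwards [Ioo_mem_nhdsLT_of_mem
      (by constructor <;> norm_num : (1:ℝ) ∈ Set.Ioc 0 1)] with ρ hρ
    have hρ0 : ((ρ:ℝ):ℂ) ≠ 0 := by exact_mod_cast hρ.1.ne'
    have hρ1 : ((ρ:ℝ):ℂ) - 1 ≠ 0 := by
      intro h
      have : ((ρ:ℝ):ℂ) = 1 := by linear_combination h
      have : ρ = 1 := by exact_mod_cast this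
      linarith [hρ.2]
    have hζn := hζne0 n
    simp only [Function.comp_apply, hf]
    by_cases hpw : p ((ρ:ℂ) * ζ n) = 0
    · rw [hpw]
      simp [hpw]
    · have hden : (ρ:ℂ) * ζ n - ζ n ≠ 0 := by
        intro h
        apply hρ1
        have : ((ρ:ℂ) - 1) * ζ n = 0 := by linear_combination h
        rcases mul_eq_zero.1 this with h' | h'
        · exact h'
        · exact absurd h' hζn
      simp only [Pi.div_apply, Function.comp_apply]
      field_simp
      ring
  -- the Finset induction (sum of Poisson masses bounded by Re (p z)⁻¹)
  have hKdiff : ∀ k, DifferentiableOn ℂ (fun z => (ζ k + z) / (ζ k - z)) (ball (0:ℂ) 1) := by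
    intro k
    exact ((differentiableOn_const _).add differentiableOn_id).div
      ((differentiableOn_const _).sub differentiableOn_id) (fun z hz => hζzne z hz k)
  have hC : ∀ s : Finset (Fin N), ∀ z ∈ ball (0:ℂ) 1,
      ∑ k ∈ s, σ k / 2 * ((1 - normSq z) / normSq (ζ k - z)) ≤ ((p z)⁻¹).re := by
    intro s
    induction s using Finset.induction_on with
    | empty => intro z hz; simpa using hPinv_re z hz
    | @insert a s ha ih =>
      intro z hz
      set Ps : ℂ → ℂ := fun z => (p z)⁻¹ - ∑ k ∈ s, ((σ k / 2 : ℝ):ℂ) * ((ζ k + z) / (ζ k - z))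
        with hPsdef
      have hPs_re : ∀ z ∈ ball (0:ℂ) 1, (Ps z).re =
          ((p z)⁻¹).re - ∑ k ∈ s, σ k / 2 * ((1 - normSq z) / normSq (ζ k - z)) := by
        intro z hz
        rw [hPsdef]
        simp only [Complex.sub_re, Complex.re_sum, Complex.re_ofReal_mul]
        congr 1
        refine Finset.sum_congr rfl fun k _ => ?_
        rw [re_K (hζ k) (hζzne z hz k)]
      have hPs_diff : DifferentiableOn ℂ Ps (ball (0:ℂ) 1) :=
        hPinv_diff.sub (DifferentiableOn.fun_sum fun k _ =>
          (hKdiff k).const_mul _)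
      have hPs_nonneg : ∀ z ∈ ball (0:ℂ) 1, 0 ≤ (Ps z).re := by
        intro z hz
        rw [hPs_re z hz]
        linarith [ih z hz]
      have hres' : Tendsto (fun ρ : ℝ => (1 - (ρ:ℂ)) * Ps ((ρ:ℂ) * ζ a))
          (nhdsWithin 1 (Set.Iio 1)) (nhds ((σ a : ℝ):ℂ)) := by
        have htail : Tendsto (fun ρ : ℝ =>
            ∑ k ∈ s, (1 - (ρ:ℂ)) * (((σ k / 2 : ℝ):ℂ) * ((ζ k + (ρ:ℂ) * ζ a) / (ζ k - (ρ:ℂ) * ζ a))))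
            (nhdsWithin 1 (Set.Iio 1)) (nhds 0) := by
        
          have : Tendsto (fun ρ : ℝ =>
              ∑ k ∈ s, (1 - (ρ:ℂ)) * (((σ k / 2 : ℝ):ℂ) * ((ζ k + (ρ:ℂ) * ζ a) / (ζ k - (ρ:ℂ) * ζ a))))
              (nhdsWithin 1 (Set.Iio 1)) (nhds (∑ k ∈ s, 0)) := by
            refine tendsto_finset_sum _ fun k hk => ?_
            have hak : ζ k - ζ a ≠ 0 := by
              refine sub_ne_zero.2 fun h => ha ?_
              have : k = a := hinj h
              rwa [this] at hk
            have tρζa : Tendsto (fun ρ : ℝ => (ρ:ℂ) * ζ a) (nhdsWithin 1 (Set.Iio 1))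
                (nhds (ζ a)) := by
              have := tendsto_ofReal_one.mul
                (tendsto_const_nhds : Tendsto (fun _ : ℝ => ζ a) _ (nhds (ζ a)))
              simpa using this
            have tK : Tendsto (fun ρ : ℝ => (ζ k + (ρ:ℂ) * ζ a) / (ζ k - (ρ:ℂ) * ζ a))
                (nhdsWithin 1 (Set.Iio 1)) (nhds ((ζ k + ζ a) / (ζ k - ζ a))) :=
              (tendsto_const_nhds.add tρζa).div (tendsto_const_nhds.sub tρζa) hak
            have := tendsto_one_sub_ofReal.mul (tendsto_const_nhds.mul tK :
              Tendsto (fun ρ : ℝ => ((σ k / 2 : ℝ):ℂ) * ((ζ k + (ρ:ℂ) * ζ a) / (ζ k - (ρ:ℂ) * ζ a)))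
                (nhdsWithin 1 (Set.Iio 1)) (nhds (((σ k / 2 : ℝ):ℂ) * ((ζ k + ζ a) / (ζ k - ζ a)))))
            simpa using this
          simpa using this
        have := (hresP a).sub htail
        rw [sub_zero] at this
        refine this.congr fun ρ => ?_
        rw [hPsdef]
        simp only [mul_sub, Finset.mul_sum]
      have := lemB hPs_diff hPs_nonneg (hζ a) (hσpos a) hres' z hz
      rw [Finset.sum_insert ha]
      rw [hPs_re z hz] at this
      linarith
  -- nonnegativity of Re R on the ball
  have hRre : ∀ z ∈ ball (0:ℂ) 1, 0 ≤ (R z).re := by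
    intro z hz
    rw [hRdef]
    simp only [Complex.sub_re, Complex.re_sum]
    have : ∑ k, (Q k z).re = ∑ k, σ k / 2 * ((1 - normSq z) / normSq (ζ k - z)) :=
      Finset.sum_congr rfl fun k _ => hQre k z hz
    rw [this]
    linarith [hC Finset.univ z hz]
  -- angular limit of (z - ζ n) * R z is 0
  have hangR : ∀ n : Fin N, ∀ M : ℝ, 1 < M →
      Tendsto (fun z => (z - ζ n) * R z) (nhdsWithin (ζ n) (StolzAngle (ζ n) M)) (nhds 0) := by
    intro n M hM
    set l := nhdsWithin (ζ n) (StolzAngle (ζ n) M) with hldef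
    have tendsto_id' : Tendsto (fun z : ℂ => z) l (nhds (ζ n)) :=
      tendsto_id.mono_right nhdsWithin_le_nhds
    have ev_ball : ∀ᶠ z in l, z ∈ ball (0:ℂ) 1 := by
      filter_upwards [eventually_mem_nhdsWithin] with z hz using stolz_subset_ball hz
    have ev_ne0 : ∀ᶠ z in l, z ≠ 0 := tendsto_id'.eventually_ne (hζne0 n)
    have hA : Tendsto (fun z => (z - ζ n) * (p z)⁻¹) l (nhds (ζ n * ((m n : ℝ):ℂ)⁻¹)) := by
      have hdiv : Tendsto (fun z => z / (f z / (z - ζ n))) l (nhds (ζ n / ((m n : ℝ):ℂ))) :=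
        tendsto_id'.div (hder n M hM) (hmC n)
      have : ζ n / ((m n : ℝ):ℂ) = ζ n * ((m n : ℝ):ℂ)⁻¹ := by rw [div_eq_mul_inv]
      rw [this] at hdiv
      refine hdiv.congr' ?_
      filter_upwards [ev_ball, ev_ne0] with z hz hz0
      rw [hf]
      have hpz := hpne z hz
      have hzζ := hzζne z hz n
      field_simp
    have hsum : Tendsto (fun z => ∑ k, (z - ζ n) * Q k z) l (nhds (ζ n * ((m n : ℝ):ℂ)⁻¹)) := by
      have hval : ∑ k, (if k = n then ζ n * ((m n : ℝ):ℂ)⁻¹ else 0) = ζ n * ((m n : ℝ):ℂ)⁻¹ := by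
        simp
      rw [← hval]
      refine tendsto_finset_sum _ fun k _ => ?_
      by_cases hk : k = n
      · subst hk
        simp only [if_pos rfl]
        have hlin : Tendsto (fun z => ((σ k : ℝ):ℂ) * (c k * (z - ζ k) - z)) l
            (nhds (((σ k : ℝ):ℂ) * (c k * (ζ k - ζ k) - ζ k))) := by
          exact tendsto_const_nhds.mul ((tendsto_const_nhds.mul
            (tendsto_id'.sub tendsto_const_nhds)).sub tendsto_id')
        have hval2 : ((σ k : ℝ):ℂ) * (c k * (ζ k - ζ k) - ζ k) = ζ k * ((m k : ℝ):ℂ)⁻¹ := by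
          rw [hσm k]
          ring
        rw [hval2] at hlin
        refine hlin.congr' ?_
        filter_upwards [ev_ball] with z hz
        rw [hQdef]
        have hzζ := hzζne z hz k
        field_simp
      · simp only [if_neg hk]
        have hkn : ζ n - ζ k ≠ 0 := sub_ne_zero.2 fun h => hk (hinj h).symm
        have tQ : Tendsto (fun z => Q k z) l (nhds (Q k (ζ n))) := by
          rw [hQdef]
          exact tendsto_const_nhds.mul (tendsto_const_nhds.sub
            (tendsto_id'.div (tendsto_id'.sub tendsto_const_nhds) hkn))
        have := (tendsto_id'.sub (tendsto_const_nhds : Tendsto (fun _ : ℂ => ζ n) l (nhds (ζ n)))).mul tQ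
        simpa using this
    have := hA.sub hsum
    rw [sub_self] at this
    refine this.congr fun z => ?_
    rw [hRdef]
    simp only [mul_sub, Finset.mul_sum]
  -- rewriting the sum in the target
  have hsum_eq : ∀ z ∈ ball (0:ℂ) 1, z ≠ 0 →
      (∑ n, (1 / ((|m n| : ℝ) : ℂ)) *
        (((starRingEnd ℂ) (ζ n) * η n / ((starRingEnd ℂ) (ζ n) * η n - 1)) * (1 / z)
          - 1 / (z - ζ n))) = (∑ k, Q k z) * z⁻¹ := by
    intro z hz hz0
    rw [Finset.sum_mul]
    refine Finset.sum_congr rfl fun k _ => ?_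
    have hσk : ((σ k : ℝ):ℂ) = 1 / ((|m k| : ℝ):ℂ) := by
      rw [hσdef]; push_cast; ring
    rw [hQdef]
    simp only
    rw [hσk, hcdef]
    simp only
    have hzζ := hzζne z hz k
    have habs : ((|m k| : ℝ):ℂ) ≠ 0 := by
      have : (0:ℝ) < |m k| := abs_pos.2 (hm k).ne
      exact_mod_cast this.ne'
    have hne1 : (starRingEnd ℂ) (ζ k) * η k - 1 ≠ 0 := sub_ne_zero.2 (hwne1 k)
    field_simp
    try ring
    try tauto
  by_cases hcase : ∀ z ∈ ball (0:ℂ) 1, (R z).re ≠ 0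
  · -- main case: Re R > 0 everywhere
    have hRpos : ∀ z ∈ ball (0:ℂ) 1, 0 < (R z).re :=
      fun z hz => lt_of_le_of_ne (hRre z hz) (Ne.symm (hcase z hz))
    have hRne : ∀ z ∈ ball (0:ℂ) 1, R z ≠ 0 := by
      intro z hz h
      exact hcase z hz (by rw [h]; simp)
    refine ⟨1, fun z => (R z)⁻¹, fun z => z * (R z)⁻¹, zero_le_one,
      hRdiff.inv hRne, ?_, fun z => rfl, ?_, ?_⟩
    · intro z hz
      rw [Complex.inv_re]
      exact div_nonneg (hRre z hz) (Complex.normSq_nonneg _)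
    · intro n M hM
      set l := nhdsWithin (ζ n) (StolzAngle (ζ n) M) with hldef
      have tendsto_id' : Tendsto (fun z : ℂ => z) l (nhds (ζ n)) :=
        tendsto_id.mono_right nhdsWithin_le_nhds
      have ev_ball : ∀ᶠ z in l, z ∈ ball (0:ℂ) 1 := by
        filter_upwards [eventually_mem_nhdsWithin] with z hz using stolz_subset_ball hz
      have ha : Tendsto (fun z : ℂ => ‖z‖) l (nhds 1) := by
        have := (continuous_norm.tendsto (ζ n)).comp tendsto_id'
        rwa [hζ n] at this
      have hb : Tendsto (fun z : ℂ => ‖(z - ζ n) * R z‖) l (nhds 0) := by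
        have := (continuous_norm.tendsto 0).comp (hangR n M hM)
        rw [norm_zero] at this
        exact this
      have hb' : ∀ᶠ z in l, 0 < ‖(z - ζ n) * R z‖ := by
        filter_upwards [ev_ball] with z hz
        exact norm_pos_iff.mpr (mul_ne_zero (hzζne z hz n) (hRne z hz))
      refine (tendsto_abs_div_atTop one_pos ha hb hb').congr' ?_
      filter_upwards [ev_ball] with z hz
      have h1 : z * (R z)⁻¹ / (z - ζ n) = z * ((z - ζ n) * R z)⁻¹ := by
        rw [mul_inv, div_eq_mul_inv]
        ring
      rw [h1]
      simp [map_mul, map_inv₀]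
    · intro z hz hfz hhz
      have hz0 : z ≠ 0 := fun h => hhz (by rw [h]; simp)
      have hpz := hpne z hz
      have hRz := hRne z hz
      rw [hsum_eq z hz hz0, hf]
      have h1 : (1:ℂ) / (z * p z) = (p z)⁻¹ * z⁻¹ := by
        rw [one_div, mul_inv, mul_comm]
      have h2 : ((1:ℝ):ℂ) / (z * (R z)⁻¹) = R z * z⁻¹ := by
        rw [Complex.ofReal_one, one_div, mul_inv, inv_inv, mul_comm]
      rw [h1, h2]
      have key : (∑ k, Q k z) + R z = (p z)⁻¹ := by rw [hRdef]; ring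
      rw [← key]
      ring
  · -- degenerate case: R is constant
    push_neg at hcase
    obtain ⟨z₀, hz₀, hRz₀⟩ := hcase
    have hconst := constOfReZero hRdiff hRre hz₀ hRz₀
    by_cases hκ : R z₀ = 0
    · -- R ≡ 0 : take r = 0 and the model generator
      set q0 : ℂ → ℂ := fun z => ∑ k, (ζ k + z) / (ζ k - z) with hq0def
      refine ⟨0, q0, fun z => z * q0 z, le_refl 0,
        DifferentiableOn.fun_sum (fun k _ => hKdiff k), ?_, fun z => rfl, ?_, ?_⟩
      · intro z hz
        rw [hq0def]
        simp only [Complex.re_sum]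
        apply Finset.sum_nonneg
        intro k _
        rw [re_K (hζ k) (hζzne z hz k)]
        have := nsq_lt_one hz
        exact div_nonneg (by linarith) (Complex.normSq_nonneg _)
      · intro n M hM
        set l := nhdsWithin (ζ n) (StolzAngle (ζ n) M) with hldef
        have tendsto_id' : Tendsto (fun z : ℂ => z) l (nhds (ζ n)) :=
          tendsto_id.mono_right nhdsWithin_le_nhds
        have ev_ball : ∀ᶠ z in l, z ∈ ball (0:ℂ) 1 := by
          filter_upwards [eventually_mem_nhdsWithin] with z hz using stolz_subset_ball hz
        have hq0lim : Tendsto (fun z => (z - ζ n) * q0 z) l (nhds (-(2 * ζ n))) := by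
          have hval : ∑ k, (if k = n then -(2 * ζ n) else 0) = -(2 * ζ n) := by simp
          have hsum : Tendsto (fun z => ∑ k, (z - ζ n) * ((ζ k + z) / (ζ k - z))) l
              (nhds (-(2 * ζ n))) := by
            rw [← hval]
            refine tendsto_finset_sum _ fun k _ => ?_
            by_cases hk : k = n
            · subst hk
              simp only [if_pos rfl]
              have hlim : Tendsto (fun z : ℂ => -(ζ k + z)) l (nhds (-(ζ k + ζ k))) :=
                (tendsto_const_nhds.add tendsto_id').neg
              have : -(ζ k + ζ k) = -(2 * ζ k) := by ring
              rw [this] at hlim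
              refine hlim.congr' ?_
              filter_upwards [ev_ball] with z hz
              have := hζzne z hz k
              field_simp
              ring
            · simp only [if_neg hk]
              have hkn : ζ k - ζ n ≠ 0 := sub_ne_zero.2 fun h => hk (hinj h)
              have tK : Tendsto (fun z : ℂ => (ζ k + z) / (ζ k - z)) l
                  (nhds ((ζ k + ζ n) / (ζ k - ζ n))) :=
                (tendsto_const_nhds.add tendsto_id').div
                  (tendsto_const_nhds.sub tendsto_id') hkn
              have := (tendsto_id'.sub
                (tendsto_const_nhds : Tendsto (fun _ : ℂ => ζ n) l (nhds (ζ n)))).mul tK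
              simpa using this
          refine hsum.congr fun z => ?_
          rw [hq0def, Finset.mul_sum]
        have hnum : Tendsto (fun z => ‖z * ((z - ζ n) * q0 z)‖) l (nhds 2) := by
          have := (continuous_norm.tendsto _).comp (tendsto_id'.mul hq0lim)
          have hval : ‖ζ n * -(2 * ζ n)‖ = 2 := by
            rw [norm_mul, norm_neg, norm_mul, hζ n, Complex.norm_two]
            norm_num
          rwa [hval] at this
        have hb : Tendsto (fun z : ℂ => ‖(z - ζ n) * (z - ζ n)‖) l (nhds 0) := by
          have h0 : Tendsto (fun z : ℂ => (z - ζ n) * (z - ζ n)) l (nhds 0) := by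
            have := (tendsto_id'.sub (tendsto_const_nhds : Tendsto (fun _ : ℂ => ζ n) l
              (nhds (ζ n)))).mul (tendsto_id'.sub (tendsto_const_nhds : Tendsto (fun _ : ℂ => ζ n)
                l (nhds (ζ n))))
            simpa using this
          have := (continuous_norm.tendsto 0).comp h0
          rw [norm_zero] at this
          exact this
        have hb' : ∀ᶠ z in l, 0 < ‖(z - ζ n) * (z - ζ n)‖ := by
          filter_upwards [ev_ball] with z hz
          exact norm_pos_iff.mpr (mul_ne_zero (hzζne z hz n) (hzζne z hz n))
        refine (tendsto_abs_div_atTop two_pos hnum hb hb').congr' ?_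
        filter_upwards [ev_ball] with z hz
        have hzζ := hzζne z hz n
        have h1 : z * q0 z / (z - ζ n) = z * ((z - ζ n) * q0 z) * ((z - ζ n) * (z - ζ n))⁻¹ := by
          field_simp
        rw [h1]
        simp [map_mul, map_inv₀]
      · intro z hz hfz hhz
        have hz0 : z ≠ 0 := fun h => hhz (by rw [h]; simp)
        have hpz := hpne z hz
        have hRzero : R z = 0 := by rw [hconst z hz, hκ]
        have key : (∑ k, Q k z) = (p z)⁻¹ := by
          have h0 : (∑ k, Q k z) + R z = (p z)⁻¹ := by rw [hRdef]; ring
          rwa [hRzero, add_zero] at h0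
        rw [hsum_eq z hz hz0, hf]
        rw [Complex.ofReal_zero, zero_div, add_zero, key]
        rw [one_div, mul_inv, mul_comm]
    · -- R ≡ κ ≠ 0, purely imaginary constant
      refine ⟨1, fun _ => (R z₀)⁻¹, fun z => z * (R z₀)⁻¹, zero_le_one,
        differentiableOn_const _, ?_, fun z => rfl, ?_, ?_⟩
      · intro z hz
        rw [Complex.inv_re, hRz₀]
        simp
      · intro n M hM
        set l := nhdsWithin (ζ n) (StolzAngle (ζ n) M) with hldef
        have tendsto_id' : Tendsto (fun z : ℂ => z) l (nhds (ζ n)) :=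
          tendsto_id.mono_right nhdsWithin_le_nhds
        have ev_ball : ∀ᶠ z in l, z ∈ ball (0:ℂ) 1 := by
          filter_upwards [eventually_mem_nhdsWithin] with z hz using stolz_subset_ball hz
        have ha : Tendsto (fun z : ℂ => ‖z * (R z₀)⁻¹‖) l
            (nhds (‖(R z₀)⁻¹‖)) := by
          have := (continuous_norm.tendsto _).comp
            (tendsto_id'.mul (tendsto_const_nhds : Tendsto (fun _ : ℂ => (R z₀)⁻¹) l _))
          have hval : ‖ζ n * (R z₀)⁻¹‖ = ‖(R z₀)⁻¹‖ := by
            rw [norm_mul, hζ n, one_mul]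
          rwa [hval] at this
        have hb : Tendsto (fun z : ℂ => ‖z - ζ n‖) l (nhds 0) := by
          have h0 : Tendsto (fun z : ℂ => z - ζ n) l (nhds 0) := by
            have := tendsto_id'.sub (tendsto_const_nhds : Tendsto (fun _ : ℂ => ζ n) l (nhds (ζ n)))
            simpa using this
          have := (continuous_norm.tendsto 0).comp h0
          rw [norm_zero] at this
          exact this
        have hb' : ∀ᶠ z in l, 0 < ‖z - ζ n‖ := by
          filter_upwards [ev_ball] with z hz
          exact norm_pos_iff.mpr (hzζne z hz n)
        have hapos : 0 < ‖(R z₀)⁻¹‖ := norm_pos_iff.mpr (inv_ne_zero hκ)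
        refine (tendsto_abs_div_atTop hapos ha hb hb').congr' ?_
        filter_upwards [] with z
        rw [div_eq_mul_inv]
        simp [map_mul, map_inv₀]
      · intro z hz hfz hhz
        have hz0 : z ≠ 0 := fun h => hhz (by rw [h]; simp)
        have hpz := hpne z hz
        have hRz : R z = R z₀ := hconst z hz
        rw [hsum_eq z hz hz0, hf]
        have h1 : (1:ℂ) / (z * p z) = (p z)⁻¹ * z⁻¹ := by
          rw [one_div, mul_inv, mul_comm]
        have h2 : ((1:ℝ):ℂ) / (z * (R z₀)⁻¹) = R z₀ * z⁻¹ := by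
          rw [Complex.ofReal_one, one_div, mul_inv, inv_inv, mul_comm]
        rw [h1, h2]
        have key : (∑ k, Q k z) + R z₀ = (p z)⁻¹ := by
          rw [← hRz, hRdef]
          ring
        rw [← key]
        ring
end
end
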